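/- arXiv:1004.3006 — 7 statements merged into one kernel-verified Lean document; each statement's English description precedes it below -/
import Mathlib

section
/- Let H be a separable Hilbert space, let Φ₁ = (φ_{1,i})_{i∈I₁} and Φ₂ = (φ_{2,i})_{i∈I₂} be Parseval frames in H, let S₁ ⊆ I₁, S₂ ⊆ I₂, δ ≥ 0, and suppose κ := κ(S₁,S₂) < 1/2. Suppose S ∈ H decomposes as S = S₁⁰ + S₂⁰ where ‖Φ₁ᵀS₁⁰‖₁ + ‖Φ₂ᵀS₂⁰‖₁ < ∞ and ‖1_{S₁ᶜ}Φ₁ᵀS₁⁰‖₁ + ‖1_{S₂ᶜ}Φ₂ᵀS₂⁰‖₁ ≤ δ. Let (S₁⋆, S₂⋆) be a minimizer of ‖Φ₁ᵀT₁‖₁ + ‖Φ₂ᵀT₂‖₁ (values in [0,∞]) over all pairs (T₁,T₂) ∈ H × H with T₁ + T₂ = S. Then ‖S₁⋆ − S₁⁰‖ + ‖S₂⋆ − S₂⁰‖ ≤ 2δ/(1 − 2κ). -/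
open scoped ENNReal NNReal

noncomputable section

variable {H : Type*} [NormedAddCommGroup H] [InnerProductSpace ℂ H]

/-- A countable family is a Parseval frame if it satisfies the Parseval identity. -/
def IsParsevalFrame {I : Type*} (Φ : I → H) : Prop :=
  ∀ f : H, ∑' i, ‖(inner ℂ (Φ i) f : ℂ)‖ ^ 2 = ‖f‖ ^ 2

/-- `ℓ¹` norm (in `[0,∞]`) of the analysis coefficients of `f` in the frame `Φ`. -/
def analysisL1 {I : Type*} (Φ : I → H) (f : H) : ℝ≥0∞ :=
  ∑' i, (‖(inner ℂ (Φ i) f : ℂ)‖₊ : ℝ≥0∞)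

/-- `ℓ¹` norm of the analysis coefficients restricted to the index set `S`. -/
def analysisL1On {I : Type*} (Φ : I → H) (S : Set I) (f : H) : ℝ≥0∞ :=
  ∑' i : S, (‖(inner ℂ (Φ (i : I)) f : ℂ)‖₊ : ℝ≥0∞)

/-- The joint concentration `κ(S₁, S₂)` of two frames on index sets `S₁`, `S₂`. -/
def jointConcentration {I₁ I₂ : Type*} (Φ₁ : I₁ → H) (Φ₂ : I₂ → H)
    (S₁ : Set I₁) (S₂ : Set I₂) : ℝ≥0∞ :=
  ⨆ f : {f : H // 0 < analysisL1 Φ₁ f + analysisL1 Φ₂ f ∧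
      analysisL1 Φ₁ f + analysisL1 Φ₂ f < ⊤},
    (analysisL1On Φ₁ S₁ (f : H) + analysisL1On Φ₂ S₂ (f : H)) /
      (analysisL1 Φ₁ (f : H) + analysisL1 Φ₂ (f : H))

lemma aL1_neg {I : Type*} (Φ : I → H) (f : H) : analysisL1 Φ (-f) = analysisL1 Φ f := by
  simp [analysisL1, inner_neg_right]

lemma aL1On_neg {I : Type*} (Φ : I → H) (S : Set I) (f : H) :
    analysisL1On Φ S (-f) = analysisL1On Φ S f := by
  simp [analysisL1On, inner_neg_right]

lemma aL1_split {I : Type*} (Φ : I → H) (S : Set I) (f : H) :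
    analysisL1 Φ f = analysisL1On Φ S f + analysisL1On Φ Sᶜ f :=
  (Summable.tsum_add_tsum_compl (f := fun i => (‖(inner ℂ (Φ i) f : ℂ)‖₊ : ℝ≥0∞))
    ENNReal.summable ENNReal.summable).symm

lemma aL1On_add {I : Type*} (Φ : I → H) (S : Set I) (f g : H) :
    analysisL1On Φ S (f + g) ≤ analysisL1On Φ S f + analysisL1On Φ S g := by
  rw [analysisL1On, analysisL1On, analysisL1On, ← ENNReal.tsum_add]
  refine ENNReal.tsum_le_tsum fun i => ?_
  rw [← ENNReal.coe_add, ENNReal.coe_le_coe, inner_add_right]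
  exact nnnorm_add_le _ _

lemma aL1_add {I : Type*} (Φ : I → H) (f g : H) :
    analysisL1 Φ (f + g) ≤ analysisL1 Φ f + analysisL1 Φ g := by
  rw [analysisL1, analysisL1, analysisL1, ← ENNReal.tsum_add]
  refine ENNReal.tsum_le_tsum fun i => ?_
  rw [← ENNReal.coe_add, ENNReal.coe_le_coe, inner_add_right]
  exact nnnorm_add_le _ _

lemma norm_le_aL1 {I : Type*} (Φ : I → H) (hΦ : IsParsevalFrame Φ) (f : H)
    (hf : analysisL1 Φ f ≠ ⊤) : ‖f‖ ≤ (analysisL1 Φ f).toReal := by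
  set c : I → ℝ≥0 := fun i => ‖(inner ℂ (Φ i) f : ℂ)‖₊ with hc
  have hsum : Summable c := ENNReal.tsum_coe_ne_top_iff_summable.1 hf
  have hsumR : Summable fun i => (c i : ℝ) := NNReal.summable_coe.2 hsum
  set M : ℝ := ∑' i, (c i : ℝ) with hM
  have hMr : (analysisL1 Φ f).toReal = M := by
    rw [analysisL1, ← ENNReal.coe_tsum hsum, ENNReal.coe_toReal, NNReal.coe_tsum]
  have hM0 : 0 ≤ M := tsum_nonneg fun i => (c i).coe_nonneg
  have hle : ∀ i, (c i : ℝ) ≤ M := fun i => Summable.le_tsum hsumR i fun j _ => (c j).coe_nonneg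
  have hsq : Summable fun i => (c i : ℝ) ^ 2 := by
    refine Summable.of_nonneg_of_le (fun i => sq_nonneg _) (fun i => ?_) (hsumR.mul_right M)
    rw [sq]
    exact mul_le_mul_of_nonneg_left (hle i) (c i).coe_nonneg
  have h1 : ‖f‖ ^ 2 ≤ M ^ 2 := by
    rw [← hΦ f]
    have heq : ∑' i, ‖(inner ℂ (Φ i) f : ℂ)‖ ^ 2 = ∑' i, (c i : ℝ) ^ 2 := by
      simp [hc, coe_nnnorm]
    rw [heq]
    calc ∑' i, (c i : ℝ) ^ 2 ≤ ∑' i, (c i : ℝ) * M := by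
          refine Summable.tsum_le_tsum (fun i => ?_) hsq (hsumR.mul_right M)
          rw [sq]; exact mul_le_mul_of_nonneg_left (hle i) (c i).coe_nonneg
      _ = M * M := by rw [tsum_mul_right]
      _ = M ^ 2 := (sq M).symm
  rw [hMr]
  exact (abs_le_of_sq_le_sq' h1 hM0).2

/-- Proposition 2.2: stability of `ℓ₁`-minimization based component separation. -/
theorem separation_l1_minimization
    [CompleteSpace H] [SecondCountableTopology H]
    {I₁ I₂ : Type*} [Countable I₁] [Countable I₂]
    (Φ₁ : I₁ → H) (Φ₂ : I₂ → H)
    (hΦ₁ : IsParsevalFrame Φ₁) (hΦ₂ : IsParsevalFrame Φ₂)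
    (S₁ : Set I₁) (S₂ : Set I₂) (δ : ℝ) (hδ : 0 ≤ δ)
    (hκ : jointConcentration Φ₁ Φ₂ S₁ S₂ < 1 / 2)
    (S S₁0 S₂0 : H) (hS : S = S₁0 + S₂0)
    (hfin : analysisL1 Φ₁ S₁0 + analysisL1 Φ₂ S₂0 < ⊤)
    (hsparse : analysisL1On Φ₁ S₁ᶜ S₁0 + analysisL1On Φ₂ S₂ᶜ S₂0 ≤ ENNReal.ofReal δ)
    (S₁s S₂s : H) (hsum : S₁s + S₂s = S)
    (hmin : ∀ T₁ T₂ : H, T₁ + T₂ = S →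
      analysisL1 Φ₁ S₁s + analysisL1 Φ₂ S₂s ≤ analysisL1 Φ₁ T₁ + analysisL1 Φ₂ T₂) :
    ‖S₁s - S₁0‖ + ‖S₂s - S₂0‖ ≤
      2 * δ / (1 - 2 * (jointConcentration Φ₁ Φ₂ S₁ S₂).toReal) := by
  set κ := jointConcentration Φ₁ Φ₂ S₁ S₂ with hκdef
  set W₁ : H := S₁s - S₁0 with hW₁def
  set W₂ : H := S₂s - S₂0 with hW₂def
  have h0 : S₁s + S₂s = S₁0 + S₂0 := by rw [hsum, hS]
  have hW : W₂ = -W₁ := by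
    rw [hW₂def, hW₁def, neg_sub, sub_eq_sub_iff_add_eq_add, add_comm S₂s S₁s, h0, add_comm]
  -- κ real estimates
  have hκfin : κ ≠ ⊤ := hκ.ne_top
  have hk2 : κ.toReal < 1 / 2 := by
    have := ENNReal.toReal_lt_toReal hκfin (by norm_num : (1 / 2 : ℝ≥0∞) ≠ ⊤) |>.2 hκ
    simpa using this
  have hden : 0 < 1 - 2 * κ.toReal := by linarith
  -- finiteness facts
  have hfin1 : analysisL1 Φ₁ S₁0 ≠ ⊤ := (lt_of_le_of_lt le_self_add hfin).ne
  have hfin2 : analysisL1 Φ₂ S₂0 ≠ ⊤ := (lt_of_le_of_lt le_add_self hfin).ne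
  have hstar : analysisL1 Φ₁ S₁s + analysisL1 Φ₂ S₂s < ⊤ :=
    lt_of_le_of_lt (hmin S₁0 S₂0 hS.symm) hfin
  have hstar1 : analysisL1 Φ₁ S₁s ≠ ⊤ := (lt_of_le_of_lt le_self_add hstar).ne
  have hstar2 : analysisL1 Φ₂ S₂s ≠ ⊤ := (lt_of_le_of_lt le_add_self hstar).ne
  have hW1eq : W₁ = S₁s + -S₁0 := by rw [hW₁def, sub_eq_add_neg]
  have hW2eq : W₂ = S₂s + -S₂0 := by rw [hW₂def, sub_eq_add_neg]
  have hW1fin : analysisL1 Φ₁ W₁ ≠ ⊤ := by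
    rw [hW1eq]
    refine ((aL1_add Φ₁ S₁s (-S₁0)).trans_lt ?_).ne
    rw [aL1_neg]
    exact ENNReal.add_lt_top.2 ⟨hstar1.lt_top, hfin1.lt_top⟩
  have hW2fin : analysisL1 Φ₂ W₂ ≠ ⊤ := by
    rw [hW2eq]
    refine ((aL1_add Φ₂ S₂s (-S₂0)).trans_lt ?_).ne
    rw [aL1_neg]
    exact ENNReal.add_lt_top.2 ⟨hstar2.lt_top, hfin2.lt_top⟩
  set T : ℝ≥0∞ := analysisL1 Φ₁ W₁ + analysisL1 Φ₂ W₂ with hTdef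
  have hTfin : T ≠ ⊤ :=
    (ENNReal.add_lt_top.2 ⟨hW1fin.lt_top, hW2fin.lt_top⟩).ne
  -- abbreviations
  set A1 := analysisL1On Φ₁ S₁ W₁ with hA1
  set B1 := analysisL1On Φ₁ S₁ᶜ W₁ with hB1
  set A2 := analysisL1On Φ₂ S₂ W₂ with hA2
  set B2 := analysisL1On Φ₂ S₂ᶜ W₂ with hB2
  set P1 := analysisL1On Φ₁ S₁ S₁0 with hP1
  set Q1 := analysisL1On Φ₁ S₁ᶜ S₁0 with hQ1
  set P2 := analysisL1On Φ₂ S₂ S₂0 with hP2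
  set Q2 := analysisL1On Φ₂ S₂ᶜ S₂0 with hQ2
  have hP1fin : P1 ≠ ⊤ := fun h => hfin1 (by rw [aL1_split Φ₁ S₁ S₁0, ← hP1, h, top_add])
  have hP2fin : P2 ≠ ⊤ := fun h => hfin2 (by rw [aL1_split Φ₂ S₂ S₂0, ← hP2, h, top_add])
  -- triangle inequalities
  have h10 : S₁0 = S₁s + -W₁ := by rw [hW₁def]; abel
  have h20 : S₂0 = S₂s + -W₂ := by rw [hW₂def]; abel
  have htr1 : P1 ≤ analysisL1On Φ₁ S₁ S₁s + A1 := by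
    rw [hP1, h10]
    exact (aL1On_add Φ₁ S₁ S₁s (-W₁)).trans_eq (by rw [aL1On_neg])
  have htr2 : B1 ≤ analysisL1On Φ₁ S₁ᶜ S₁s + Q1 := by
    rw [hB1, hW1eq]
    exact (aL1On_add Φ₁ S₁ᶜ S₁s (-S₁0)).trans_eq (by rw [aL1On_neg])
  have htr3 : P2 ≤ analysisL1On Φ₂ S₂ S₂s + A2 := by
    rw [hP2, h20]
    exact (aL1On_add Φ₂ S₂ S₂s (-W₂)).trans_eq (by rw [aL1On_neg])
  have htr4 : B2 ≤ analysisL1On Φ₂ S₂ᶜ S₂s + Q2 := by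
    rw [hB2, hW2eq]
    exact (aL1On_add Φ₂ S₂ᶜ S₂s (-S₂0)).trans_eq (by rw [aL1On_neg])
  -- key combined inequality
  have hminS : analysisL1 Φ₁ S₁s + analysisL1 Φ₂ S₂s ≤ P1 + Q1 + (P2 + Q2) := by
    calc analysisL1 Φ₁ S₁s + analysisL1 Φ₂ S₂s
        ≤ analysisL1 Φ₁ S₁0 + analysisL1 Φ₂ S₂0 := hmin S₁0 S₂0 hS.symm
      _ = P1 + Q1 + (P2 + Q2) := by
          rw [aL1_split Φ₁ S₁ S₁0, aL1_split Φ₂ S₂ S₂0]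
  have key : P1 + P2 + (B1 + B2) ≤ P1 + P2 + (A1 + A2 + (Q1 + Q2) + (Q1 + Q2)) := by
    calc P1 + P2 + (B1 + B2)
        ≤ (analysisL1On Φ₁ S₁ S₁s + A1) + (analysisL1On Φ₂ S₂ S₂s + A2) +
            ((analysisL1On Φ₁ S₁ᶜ S₁s + Q1) + (analysisL1On Φ₂ S₂ᶜ S₂s + Q2)) :=
          add_le_add (add_le_add htr1 htr3) (add_le_add htr2 htr4)
      _ = (analysisL1 Φ₁ S₁s + analysisL1 Φ₂ S₂s) + (A1 + A2 + (Q1 + Q2)) := by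
          rw [aL1_split Φ₁ S₁ S₁s, aL1_split Φ₂ S₂ S₂s]; ring
      _ ≤ (P1 + Q1 + (P2 + Q2)) + (A1 + A2 + (Q1 + Q2)) := add_le_add_left hminS _
      _ = P1 + P2 + (A1 + A2 + (Q1 + Q2) + (Q1 + Q2)) := by ring
  have hBA : B1 + B2 ≤ A1 + A2 + (Q1 + Q2) + (Q1 + Q2) := by
    have hfinP : P1 + P2 ≠ ⊤ := (ENNReal.add_lt_top.2 ⟨hP1fin.lt_top, hP2fin.lt_top⟩).ne
    exact (ENNReal.add_le_add_iff_left hfinP).1 key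
  have hB : B1 + B2 ≤ A1 + A2 + ENNReal.ofReal δ + ENNReal.ofReal δ :=
    hBA.trans (add_le_add (add_le_add_right hsparse _) hsparse)
  -- splitting of T
  have hTsplit : T = A1 + A2 + (B1 + B2) := by
    rw [hTdef, aL1_split Φ₁ S₁ W₁, aL1_split Φ₂ S₂ W₂]; ring
  by_cases hT0 : T = 0
  · -- trivial case: W₁ = W₂ = 0
    have hz1 : analysisL1 Φ₁ W₁ = 0 := by
      simpa [hT0] using (le_self_add : analysisL1 Φ₁ W₁ ≤ T).trans_eq hT0
    have hz2 : analysisL1 Φ₂ W₂ = 0 := by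
      simpa [hT0] using (le_add_self : analysisL1 Φ₂ W₂ ≤ T).trans_eq hT0
    have hn1 : ‖W₁‖ = 0 := le_antisymm (by simpa [hz1] using norm_le_aL1 Φ₁ hΦ₁ W₁ hW1fin)
      (norm_nonneg _)
    have hn2 : ‖W₂‖ = 0 := le_antisymm (by simpa [hz2] using norm_le_aL1 Φ₂ hΦ₂ W₂ hW2fin)
      (norm_nonneg _)
    rw [hn1, hn2]
    have : (0:ℝ) ≤ 2 * δ / (1 - 2 * κ.toReal) := div_nonneg (by linarith) hden.le
    linarith
  · -- main case: use joint concentration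
    have hAk : A1 + A2 ≤ κ * T := by
      have hd2 : analysisL1 Φ₂ W₁ = analysisL1 Φ₂ W₂ := by rw [hW, aL1_neg]
      have hn2 : analysisL1On Φ₂ S₂ W₁ = A2 := by rw [hA2, hW, aL1On_neg]
      have hmem : 0 < analysisL1 Φ₁ W₁ + analysisL1 Φ₂ W₁ ∧
          analysisL1 Φ₁ W₁ + analysisL1 Φ₂ W₁ < ⊤ := by
        rw [hd2, ← hTdef]
        exact ⟨pos_iff_ne_zero.2 hT0, hTfin.lt_top⟩
      have hsup : (analysisL1On Φ₁ S₁ W₁ + analysisL1On Φ₂ S₂ W₁) /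
          (analysisL1 Φ₁ W₁ + analysisL1 Φ₂ W₁) ≤ κ :=
        le_iSup (fun f : {f : H // 0 < analysisL1 Φ₁ f + analysisL1 Φ₂ f ∧
            analysisL1 Φ₁ f + analysisL1 Φ₂ f < ⊤} =>
          (analysisL1On Φ₁ S₁ (f : H) + analysisL1On Φ₂ S₂ (f : H)) /
            (analysisL1 Φ₁ (f : H) + analysisL1 Φ₂ (f : H))) ⟨W₁, hmem⟩
      rw [hn2, hd2, ← hTdef, ← hA1] at hsup
      exact (ENNReal.div_le_iff_le_mul (Or.inl hT0) (Or.inl hTfin)).1 hsup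
    have hTle : T ≤ κ * T + κ * T + ENNReal.ofReal δ + ENNReal.ofReal δ := by
      calc T = A1 + A2 + (B1 + B2) := hTsplit
        _ ≤ (A1 + A2) + (A1 + A2 + ENNReal.ofReal δ + ENNReal.ofReal δ) := add_le_add_right hB _
        _ ≤ κ * T + (κ * T + ENNReal.ofReal δ + ENNReal.ofReal δ) :=
            add_le_add hAk (add_le_add_left (add_le_add_left hAk _) _)
        _ = κ * T + κ * T + ENNReal.ofReal δ + ENNReal.ofReal δ := by ring
    -- pass to real numbers
    set t : ℝ := T.toReal with htdef
    set k : ℝ := κ.toReal with hkdef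
    have hkT : (κ * T).toReal = k * t := by rw [ENNReal.toReal_mul]
    have hkTfin : κ * T ≠ ⊤ := ENNReal.mul_ne_top hκfin hTfin
    have htreal : t ≤ k * t + k * t + δ + δ := by
      have hrhsfin : κ * T + κ * T + ENNReal.ofReal δ + ENNReal.ofReal δ ≠ ⊤ := by
        simp [ENNReal.add_eq_top, hkTfin]
      have := ENNReal.toReal_mono hrhsfin hTle
      rwa [ENNReal.toReal_add (by simp [ENNReal.add_eq_top, hkTfin]) ENNReal.ofReal_ne_top,
        ENNReal.toReal_add (by simp [ENNReal.add_eq_top, hkTfin]) ENNReal.ofReal_ne_top,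
        ENNReal.toReal_add hkTfin hkTfin, hkT, ENNReal.toReal_ofReal hδ] at this
    have ht2 : t ≤ 2 * δ / (1 - 2 * k) := by
      rw [le_div_iff₀ hden]
      nlinarith
    have hnorm : ‖W₁‖ + ‖W₂‖ ≤ t := by
      have e1 := norm_le_aL1 Φ₁ hΦ₁ W₁ hW1fin
      have e2 := norm_le_aL1 Φ₂ hΦ₂ W₂ hW2fin
      have : t = (analysisL1 Φ₁ W₁).toReal + (analysisL1 Φ₂ W₂).toReal := by
        rw [htdef, hTdef, ENNReal.toReal_add hW1fin hW2fin]
      rw [this]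
      exact add_le_add e1 e2
    calc ‖W₁‖ + ‖W₂‖ ≤ t := hnorm
      _ ≤ 2 * δ / (1 - 2 * k) := ht2
end
end

section
/- Let H be a separable Hilbert space, let Φ₁ = (φ_{1,i})_{i∈I₁} and Φ₂ = (φ_{2,i})_{i∈I₂} be Parseval frames in H, and let S₁ ⊆ I₁ and S₂ ⊆ I₂. Then the joint concentration satisfies κ(S₁,S₂) ≤ max{ μ_c(S₁, Φ₁; Φ₂), μ_c(S₂, Φ₂; Φ₁) }. -/
open scoped ENNReal NNReal

noncomputable section

variable {H : Type*} [NormedAddCommGroup H] [InnerProductSpace ℂ H]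

/-- Cluster coherence `μ_c(S, Φ; Ψ)` of the frame `Φ` with respect to `Ψ` on `S`. -/
def clusterCoherence {I J : Type*} (Φ : I → H) (Ψ : J → H) (S : Set I) : ℝ≥0∞ :=
  ⨆ j : J, ∑' i : S, (‖(inner ℂ (Φ (i : I)) (Ψ j) : ℂ)‖₊ : ℝ≥0∞)

lemma parseval_summable {I : Type*} {Φ : I → H} (hΦ : IsParsevalFrame Φ) (f : H) :
    Summable fun i => ‖(inner ℂ (Φ i) f : ℂ)‖ ^ (2 : ℝ) := by
  simp_rw [Real.rpow_two]
  by_contra h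
  have h0 := tsum_eq_zero_of_not_summable h
  rw [hΦ f] at h0
  have hf : f = 0 := norm_eq_zero.mp (sq_eq_zero_iff.mp h0)
  apply h
  subst hf
  simp only [inner_zero_right, norm_zero]
  simpa using summable_zero

/-- The analysis operator of a Parseval frame, as a linear isometry into `ℓ²`. -/
def parsevalIsometry {I : Type*} (Φ : I → H) (hΦ : IsParsevalFrame Φ) :
    H →ₗᵢ[ℂ] lp (fun _ : I => ℂ) 2 where
  toFun f := ⟨fun i => (inner ℂ (Φ i) f : ℂ), memℓp_gen (by simpa using parseval_summable hΦ f)⟩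
  map_add' f g := by ext i; simp [inner_add_right]; rfl
  map_smul' c f := by ext i; simp [inner_smul_right]
  norm_map' f := by
    rw [lp.norm_eq_tsum_rpow (by norm_num) _]
    show (∑' i, ‖(inner ℂ (Φ i) f : ℂ)‖ ^ ((2:ℝ≥0∞)).toReal) ^ (1/((2:ℝ≥0∞)).toReal) = ‖f‖
    have h2 : ((2:ℝ≥0∞)).toReal = (2:ℝ) := by norm_num
    rw [h2]
    have key : (∑' i, ‖(inner ℂ (Φ i) f : ℂ)‖ ^ (2:ℝ)) = ‖f‖ ^ 2 := by
      simpa [Real.rpow_two] using hΦ f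
    rw [key, ← Real.rpow_natCast ‖f‖ 2]
    rw [← Real.rpow_mul (norm_nonneg f)]
    norm_num

lemma parseval_inner {I : Type*} {Φ : I → H} (hΦ : IsParsevalFrame Φ) (g f : H) :
    (inner ℂ g f : ℂ) = ∑' i, (starRingEnd ℂ) (inner ℂ (Φ i) g : ℂ) * (inner ℂ (Φ i) f : ℂ) := by
  have h := ((parsevalIsometry Φ hΦ).inner_map_map g f).symm
  rw [lp.inner_eq_tsum] at h
  exact h.trans (tsum_congr fun i => by rw [RCLike.inner_apply, mul_comm]; rfl)

lemma my_ennnorm_tsum_le {ι E : Type*} [NormedAddCommGroup E] [CompleteSpace E] (f : ι → E) :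
    (‖∑' i, f i‖₊ : ℝ≥0∞) ≤ ∑' i, (‖f i‖₊ : ℝ≥0∞) := by
  by_cases h : Summable fun i => ‖f i‖₊
  · rw [← ENNReal.coe_tsum h]
    exact ENNReal.coe_le_coe.2 (nnnorm_tsum_le h)
  · have ht : (∑' i, (‖f i‖₊ : ℝ≥0∞)) = ⊤ := by
      by_contra h'
      exact h (ENNReal.tsum_coe_ne_top_iff_summable.1 h')
    simp [ht]

lemma nn_inner_le {I : Type*} {Ψ : I → H} (hΨ : IsParsevalFrame Ψ) (g f : H) :
    (‖(inner ℂ g f : ℂ)‖₊ : ℝ≥0∞) ≤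
      ∑' j, (‖(inner ℂ g (Ψ j) : ℂ)‖₊ : ℝ≥0∞) * (‖(inner ℂ (Ψ j) f : ℂ)‖₊ : ℝ≥0∞) := by
  rw [parseval_inner hΨ g f]
  refine le_trans (my_ennnorm_tsum_le _) (le_of_eq (tsum_congr fun j => ?_))
  rw [inner_conj_symm, nnnorm_mul, ENNReal.coe_mul]

lemma analysisL1On_le {I₁ I₂ : Type*} (Φ : I₁ → H) (Ψ : I₂ → H)
    (hΨ : IsParsevalFrame Ψ) (S : Set I₁) (f : H) :
    analysisL1On Φ S f ≤ clusterCoherence Φ Ψ S * analysisL1 Ψ f := by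
  calc analysisL1On Φ S f
      ≤ ∑' i : S, ∑' j, (‖(inner ℂ (Φ (i : I₁)) (Ψ j) : ℂ)‖₊ : ℝ≥0∞) *
          (‖(inner ℂ (Ψ j) f : ℂ)‖₊ : ℝ≥0∞) :=
        ENNReal.tsum_le_tsum fun i => nn_inner_le hΨ (Φ (i : I₁)) f
    _ = ∑' j, ∑' i : S, (‖(inner ℂ (Φ (i : I₁)) (Ψ j) : ℂ)‖₊ : ℝ≥0∞) *
          (‖(inner ℂ (Ψ j) f : ℂ)‖₊ : ℝ≥0∞) := ENNReal.tsum_comm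
    _ = ∑' j, (∑' i : S, (‖(inner ℂ (Φ (i : I₁)) (Ψ j) : ℂ)‖₊ : ℝ≥0∞)) *
          (‖(inner ℂ (Ψ j) f : ℂ)‖₊ : ℝ≥0∞) := by
        exact tsum_congr fun j => (ENNReal.tsum_mul_right).symm ▸ ENNReal.tsum_mul_right
    _ ≤ ∑' j, clusterCoherence Φ Ψ S * (‖(inner ℂ (Ψ j) f : ℂ)‖₊ : ℝ≥0∞) :=
        ENNReal.tsum_le_tsum fun j =>
          mul_le_mul_left (le_iSup (fun j => ∑' i : S,
            (‖(inner ℂ (Φ (i : I₁)) (Ψ j) : ℂ)‖₊ : ℝ≥0∞)) j) _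
    _ = clusterCoherence Φ Ψ S * analysisL1 Ψ f := ENNReal.tsum_mul_left

/-- Lemma 2.3: the joint concentration is bounded by the maximum of the two cluster
coherences. -/
theorem jointConcentration_le_max_clusterCoherence
    [CompleteSpace H] [SecondCountableTopology H]
    {I₁ I₂ : Type*} [Countable I₁] [Countable I₂]
    (Φ₁ : I₁ → H) (Φ₂ : I₂ → H)
    (hΦ₁ : IsParsevalFrame Φ₁) (hΦ₂ : IsParsevalFrame Φ₂)
    (S₁ : Set I₁) (S₂ : Set I₂) :
    jointConcentration Φ₁ Φ₂ S₁ S₂ ≤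
      max (clusterCoherence Φ₁ Φ₂ S₁) (clusterCoherence Φ₂ Φ₁ S₂) := by
  set M := max (clusterCoherence Φ₁ Φ₂ S₁) (clusterCoherence Φ₂ Φ₁ S₂) with hM
  refine iSup_le fun ⟨f, hf0, hft⟩ => ?_
  have h1 : analysisL1On Φ₁ S₁ f ≤ M * analysisL1 Φ₂ f :=
    (analysisL1On_le Φ₁ Φ₂ hΦ₂ S₁ f).trans
      (mul_le_mul_left (le_max_left _ _) _)
  have h2 : analysisL1On Φ₂ S₂ f ≤ M * analysisL1 Φ₁ f :=
    (analysisL1On_le Φ₂ Φ₁ hΦ₁ S₂ f).trans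
      (mul_le_mul_left (le_max_right _ _) _)
  have hnum : analysisL1On Φ₁ S₁ f + analysisL1On Φ₂ S₂ f ≤
      M * (analysisL1 Φ₁ f + analysisL1 Φ₂ f) := by
    rw [mul_add]
    calc analysisL1On Φ₁ S₁ f + analysisL1On Φ₂ S₂ f
        ≤ M * analysisL1 Φ₂ f + M * analysisL1 Φ₁ f := add_le_add h1 h2
      _ = M * analysisL1 Φ₁ f + M * analysisL1 Φ₂ f := by ring
  rw [mul_comm] at hnum
  exact ENNReal.div_le_of_le_mul' hnum
end
end

section
/- Let H be a separable Hilbert space and Φ₁ = (φ_{1,i})_{i∈I₁}, Φ₂ = (φ_{2,i})_{i∈I₂} Parseval frames in H. Suppose for each j ∈ ℕ we are given f_j = P_j + C_j ∈ H with f_j ≠ 0 and ‖Φ₁ᵀP_j‖₁ + ‖Φ₂ᵀC_j‖₁ < ∞, subsets S_{1,j} ⊆ I₁ and S_{2,j} ⊆ I₂, and a pair (W_j, C⋆_j) minimizing ‖Φ₁ᵀT₁‖₁ + ‖Φ₂ᵀT₂‖₁ over all decompositions T₁ + T₂ = f_j. Assume (i) μ_c(S_{1,j}, Φ₁; Φ₂)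 → 0 and μ_c(S_{2,j}, Φ₂; Φ₁) → 0 as j → ∞, and (ii) δ_j := ‖1_{S_{1,j}ᶜ}Φ₁ᵀP_j‖₁ + ‖1_{S_{2,j}ᶜ}Φ₂ᵀC_j‖₁ = o(‖f_j‖) as j → ∞. Then (‖W_j − P_j‖ + ‖C⋆_j − C_j‖)/‖f_j‖ → 0 as j → ∞. -/
open scoped ENNReal NNReal
open Filter

noncomputable section

variable {H : Type*} [NormedAddCommGroup H] [InnerProductSpace ℂ H]

lemma ofReal_norm_eq_coe_nnnorm {E : Type*} [SeminormedAddCommGroup E] (a : E) :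
    ENNReal.ofReal ‖a‖ = (‖a‖₊ : ℝ≥0∞) := ENNReal.ofReal_eq_coe_nnreal _


lemma IsParsevalFrame.summable_sq {I : Type*} {Φ : I → H} (hΦ : IsParsevalFrame Φ) (x : H) :
    Summable fun i => ‖(inner ℂ (Φ i) x : ℂ)‖ ^ 2 := by
  by_contra hs
  have h0 := hΦ x
  rw [tsum_eq_zero_of_not_summable hs] at h0
  have hx : x = 0 := by
    have : ‖x‖ = 0 := by nlinarith [norm_nonneg x]
    simpa using this
  subst hx
  exact hs (by simpa using summable_zero)

/-- The analysis operator of a Parseval frame, as a linear isometry into `ℓ²`. -/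
def frameAnalysis {J : Type*} (Φ : J → H) (hΦ : IsParsevalFrame Φ) :
    H →ₗᵢ[ℂ] lp (fun _ : J => ℂ) 2 where
  toFun x := ⟨fun j => (inner ℂ (Φ j) x : ℂ), by
    apply memℓp_gen
    have := hΦ.summable_sq x
    simpa [ENNReal.toReal_ofNat, Real.rpow_natCast] using this⟩
  map_add' x y := by
    apply Subtype.ext
    funext j
    simp only [inner_add_right]
    rfl
  map_smul' c x := by
    apply Subtype.ext
    funext j
    simp only [inner_smul_right]
    rfl
  norm_map' x := by
    have h2 : (0:ℝ) < (2 : ℝ≥0∞).toReal := by norm_num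
    rw [lp.norm_eq_tsum_rpow h2]
    have key : (∑' j, ‖(inner ℂ (Φ j) x : ℂ)‖ ^ ((2:ℝ≥0∞).toReal)) = ‖x‖ ^ 2 := by
      rw [← hΦ x]
      congr 1
      funext j
      simp [ENNReal.toReal_ofNat, Real.rpow_natCast]
    show (∑' j, ‖(inner ℂ (Φ j) x : ℂ)‖ ^ ((2:ℝ≥0∞).toReal)) ^ (1/(2:ℝ≥0∞).toReal) = ‖x‖
    rw [key, ← Real.rpow_natCast ‖x‖ 2, ← Real.rpow_mul (norm_nonneg x)]
    norm_num

lemma IsParsevalFrame.inner_tsum {J : Type*} {Φ : J → H} (hΦ : IsParsevalFrame Φ) (u g : H) :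
    (inner ℂ u g : ℂ) = ∑' j, (inner ℂ u (Φ j) : ℂ) * (inner ℂ (Φ j) g : ℂ) := by
  have h := (frameAnalysis Φ hΦ).inner_map_map u g
  rw [lp.inner_eq_tsum] at h
  rw [← h]
  congr 1
  funext j
  show (inner ℂ ((inner ℂ (Φ j) u : ℂ)) ((inner ℂ (Φ j) g : ℂ)) : ℂ) = _
  rw [RCLike.inner_apply, ← inner_conj_symm u (Φ j), mul_comm]

lemma nnnorm_inner_le_tsum {J : Type*} {Ψ : J → H} (hΨ : IsParsevalFrame Ψ) (u g : H) :
    (‖(inner ℂ u g : ℂ)‖₊ : ℝ≥0∞) ≤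
      ∑' j, (‖(inner ℂ u (Ψ j) : ℂ)‖₊ : ℝ≥0∞) * (‖(inner ℂ (Ψ j) g : ℂ)‖₊ : ℝ≥0∞) := by
  by_cases htop : (∑' j, (‖(inner ℂ u (Ψ j) : ℂ)‖₊ : ℝ≥0∞) * (‖(inner ℂ (Ψ j) g : ℂ)‖₊ : ℝ≥0∞)) = ⊤
  · simp [htop]
  · have hsum : Summable fun j => ‖(inner ℂ u (Ψ j) : ℂ)‖₊ * ‖(inner ℂ (Ψ j) g : ℂ)‖₊ := by
      rw [← ENNReal.tsum_coe_ne_top_iff_summable]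
      simpa [ENNReal.coe_mul] using htop
    have hsum2 : Summable fun j => ‖(inner ℂ u (Ψ j) : ℂ)‖ * ‖(inner ℂ (Ψ j) g : ℂ)‖ := by
      simpa [NNReal.coe_mul] using NNReal.summable_coe.2 hsum
    have hsum' : Summable fun j => ‖(inner ℂ u (Ψ j) : ℂ) * (inner ℂ (Ψ j) g : ℂ)‖ := by
      simpa [norm_mul] using hsum2
    have h1 : ‖(inner ℂ u g : ℂ)‖ ≤ ∑' j, ‖(inner ℂ u (Ψ j) : ℂ)‖ * ‖(inner ℂ (Ψ j) g : ℂ)‖ := by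
      rw [hΨ.inner_tsum u g]
      refine (norm_tsum_le_tsum_norm hsum').trans_eq ?_
      simp only [norm_mul]
    calc (‖(inner ℂ u g : ℂ)‖₊ : ℝ≥0∞)
        ≤ ENNReal.ofReal (∑' j, ‖(inner ℂ u (Ψ j) : ℂ)‖ * ‖(inner ℂ (Ψ j) g : ℂ)‖) := by
          rw [← ofReal_norm_eq_coe_nnnorm]
          exact ENNReal.ofReal_le_ofReal h1
      _ = ∑' j, (‖(inner ℂ u (Ψ j) : ℂ)‖₊ : ℝ≥0∞) * (‖(inner ℂ (Ψ j) g : ℂ)‖₊ : ℝ≥0∞) := by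
          rw [ENNReal.ofReal_tsum_of_nonneg (fun j => by positivity) hsum2]
          congr 1
          funext j
          rw [ENNReal.ofReal_mul (norm_nonneg _), ofReal_norm_eq_coe_nnnorm,
            ofReal_norm_eq_coe_nnnorm]

lemma analysisL1On_le_coherence {I J : Type*} (Φ : I → H) {Ψ : J → H}
    (hΨ : IsParsevalFrame Ψ) (S : Set I) (g : H) :
    analysisL1On Φ S g ≤ clusterCoherence Φ Ψ S * analysisL1 Ψ g := by
  calc analysisL1On Φ S g
      ≤ ∑' i : S, ∑' j, (‖(inner ℂ (Φ (i:I)) (Ψ j) : ℂ)‖₊ : ℝ≥0∞) * (‖(inner ℂ (Ψ j) g : ℂ)‖₊ : ℝ≥0∞) :=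
        ENNReal.tsum_le_tsum fun i => nnnorm_inner_le_tsum hΨ _ g
    _ = ∑' j, ∑' i : S, (‖(inner ℂ (Φ (i:I)) (Ψ j) : ℂ)‖₊ : ℝ≥0∞) * (‖(inner ℂ (Ψ j) g : ℂ)‖₊ : ℝ≥0∞) :=
        ENNReal.tsum_comm
    _ = ∑' j, (∑' i : S, (‖(inner ℂ (Φ (i:I)) (Ψ j) : ℂ)‖₊ : ℝ≥0∞)) * (‖(inner ℂ (Ψ j) g : ℂ)‖₊ : ℝ≥0∞) := by
        congr 1; funext j; rw [ENNReal.tsum_mul_right]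
    _ ≤ ∑' j, clusterCoherence Φ Ψ S * (‖(inner ℂ (Ψ j) g : ℂ)‖₊ : ℝ≥0∞) := by
        refine ENNReal.tsum_le_tsum fun j => ?_
        exact mul_le_mul_left (le_iSup (fun j => ∑' i : S, (‖(inner ℂ (Φ (i:I)) (Ψ j) : ℂ)‖₊ : ℝ≥0∞)) j) _
    _ = clusterCoherence Φ Ψ S * analysisL1 Ψ g := ENNReal.tsum_mul_left

lemma IsParsevalFrame.norm_le_one {I : Type*} {Φ : I → H} (hΦ : IsParsevalFrame Φ) (i : I) :
    ‖Φ i‖ ≤ 1 := by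
  have h := hΦ (Φ i)
  have hs := hΦ.summable_sq (Φ i)
  have hterm : ‖(inner ℂ (Φ i) (Φ i) : ℂ)‖ ^ 2 ≤ ‖Φ i‖ ^ 2 := by
    rw [← h]; exact hs.le_tsum i fun j _ => by positivity
  rw [inner_self_eq_norm_sq_to_K] at hterm
  by_contra hlt
  push_neg at hlt
  have : ‖Φ i‖ ^ 4 ≤ ‖Φ i‖ ^ 2 := by
    calc ‖Φ i‖ ^ 4 = ‖(‖Φ i‖ ^ 2 : ℂ)‖ ^ 2 := by
          simp [norm_pow]; ring
      _ ≤ ‖Φ i‖ ^ 2 := hterm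
  nlinarith [norm_nonneg (Φ i), sq_nonneg (‖Φ i‖ ^ 2 - 1), sq_nonneg (‖Φ i‖ - 1), sq_nonneg (‖Φ i‖ + 1)]

lemma ofReal_norm_le_analysisL1 {I : Type*} {Φ : I → H} (hΦ : IsParsevalFrame Φ) (h : H) :
    ENNReal.ofReal ‖h‖ ≤ analysisL1 Φ h := by
  rcases eq_or_ne h 0 with rfl | hne
  · simp
  have hnorm : (0:ℝ) < ‖h‖ := norm_pos_iff.2 hne
  have hbound : ∀ i, (‖(inner ℂ (Φ i) h : ℂ)‖₊ : ℝ≥0∞) ≤ ENNReal.ofReal ‖h‖ := by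
    intro i
    rw [← ofReal_norm_eq_coe_nnnorm]
    refine ENNReal.ofReal_le_ofReal ?_
    calc ‖(inner ℂ (Φ i) h : ℂ)‖ ≤ ‖Φ i‖ * ‖h‖ := norm_inner_le_norm _ _
      _ ≤ 1 * ‖h‖ := by gcongr; exact hΦ.norm_le_one i
      _ = ‖h‖ := one_mul _
  have hsq : ENNReal.ofReal ‖h‖ * ENNReal.ofReal ‖h‖ ≤ ENNReal.ofReal ‖h‖ * analysisL1 Φ h := by
    calc ENNReal.ofReal ‖h‖ * ENNReal.ofReal ‖h‖ = ENNReal.ofReal (‖h‖ ^ 2) := by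
          rw [← ENNReal.ofReal_mul (norm_nonneg h)]; ring_nf
      _ = ∑' i, ENNReal.ofReal (‖(inner ℂ (Φ i) h : ℂ)‖ ^ 2) := by
          rw [← ENNReal.ofReal_tsum_of_nonneg (fun i => by positivity) (hΦ.summable_sq h), hΦ h]
      _ = ∑' i, (‖(inner ℂ (Φ i) h : ℂ)‖₊ : ℝ≥0∞) * (‖(inner ℂ (Φ i) h : ℂ)‖₊ : ℝ≥0∞) := by
          congr 1; funext i
          rw [pow_two, ENNReal.ofReal_mul (norm_nonneg _), ofReal_norm_eq_coe_nnnorm]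
      _ ≤ ∑' i, ENNReal.ofReal ‖h‖ * (‖(inner ℂ (Φ i) h : ℂ)‖₊ : ℝ≥0∞) :=
          ENNReal.tsum_le_tsum fun i => mul_le_mul_left (hbound i) _
      _ = ENNReal.ofReal ‖h‖ * analysisL1 Φ h := ENNReal.tsum_mul_left
  rwa [ENNReal.mul_le_mul_iff_right (by simpa using hnorm.ne') ENNReal.ofReal_ne_top] at hsq

lemma analysisL1On_add_le {I : Type*} (Φ : I → H) (S : Set I) (a b : H) :
    analysisL1On Φ S (a + b) ≤ analysisL1On Φ S a + analysisL1On Φ S b := by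
  unfold analysisL1On
  rw [← ENNReal.tsum_add]
  refine ENNReal.tsum_le_tsum fun i => ?_
  rw [← ENNReal.coe_add]
  exact_mod_cast (nnnorm_add_le _ _).trans_eq' (by rw [inner_add_right])

lemma analysisL1On_neg {I : Type*} (Φ : I → H) (S : Set I) (a : H) :
    analysisL1On Φ S (-a) = analysisL1On Φ S a := by
  unfold analysisL1On
  congr 1; funext i; rw [inner_neg_right, nnnorm_neg]

lemma analysisL1On_le_add {I : Type*} (Φ : I → H) (S : Set I) (a b : H) :
    analysisL1On Φ S a ≤ analysisL1On Φ S (a + b) + analysisL1On Φ S b := by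
  calc analysisL1On Φ S a = analysisL1On Φ S ((a + b) + (-b)) := by rw [add_neg_cancel_right]
    _ ≤ analysisL1On Φ S (a + b) + analysisL1On Φ S (-b) := analysisL1On_add_le _ _ _ _
    _ = _ := by rw [analysisL1On_neg]

lemma analysisL1_eq_add_compl {I : Type*} (Φ : I → H) (S : Set I) (g : H) :
    analysisL1 Φ g = analysisL1On Φ S g + analysisL1On Φ Sᶜ g :=
  (Summable.tsum_add_tsum_compl (f := fun i => (‖(inner ℂ (Φ i) g : ℂ)‖₊ : ℝ≥0∞))
    ENNReal.summable ENNReal.summable).symm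

lemma analysisL1On_le_analysisL1 {I : Type*} (Φ : I → H) (S : Set I) (g : H) :
    analysisL1On Φ S g ≤ analysisL1 Φ g := by
  rw [analysisL1_eq_add_compl Φ S g]; exact le_self_add

lemma analysisL1_le_add {I : Type*} (Φ : I → H) (a b : H) :
    analysisL1 Φ a ≤ analysisL1 Φ (a + b) + analysisL1 Φ b := by
  unfold analysisL1
  rw [← ENNReal.tsum_add]
  refine ENNReal.tsum_le_tsum fun i => ?_
  rw [← ENNReal.coe_add]
  have : (inner ℂ (Φ i) a : ℂ) = inner ℂ (Φ i) (a + b) + inner ℂ (Φ i) (-b) := by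
    rw [inner_add_right, inner_neg_right]; ring
  rw [this]
  exact_mod_cast (nnnorm_add_le _ _).trans_eq (by rw [inner_neg_right, nnnorm_neg])

lemma key_bound {I₁ I₂ : Type*} {Φ₁ : I₁ → H} {Φ₂ : I₂ → H}
    (hΦ₁ : IsParsevalFrame Φ₁) (hΦ₂ : IsParsevalFrame Φ₂)
    {P C W Cs : H} (hsum : W + Cs = P + C)
    (hfin : analysisL1 Φ₁ P + analysisL1 Φ₂ C < ⊤)
    (hmin : analysisL1 Φ₁ W + analysisL1 Φ₂ Cs ≤ analysisL1 Φ₁ P + analysisL1 Φ₂ C)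
    {S₁ : Set I₁} {S₂ : Set I₂}
    (hμ₁ : clusterCoherence Φ₁ Φ₂ S₁ ≤ 8⁻¹)
    (hμ₂ : clusterCoherence Φ₂ Φ₁ S₂ ≤ 8⁻¹) :
    ENNReal.ofReal (‖W - P‖ + ‖Cs - C‖) ≤
      4 * (analysisL1On Φ₁ S₁ᶜ P + analysisL1On Φ₂ S₂ᶜ C) := by
  set h : H := W - P with hh
  have hWPh : P + h = W := by rw [hh]; abel
  have hCsC : Cs - C = -h := by
    rw [hh]
    have : Cs = P + C - W := by rw [← hsum]; abel
    rw [this]; abel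
  have hCsh : C + -h = Cs := by rw [← hCsC]; abel
  -- finiteness facts
  have hPfin : analysisL1 Φ₁ P ≠ ⊤ := (lt_of_le_of_lt le_self_add hfin).ne
  have hCfin : analysisL1 Φ₂ C ≠ ⊤ := (lt_of_le_of_lt le_add_self hfin).ne
  have hWfin : analysisL1 Φ₁ W ≠ ⊤ := (lt_of_le_of_lt (le_self_add.trans hmin) hfin).ne
  have hCsfin : analysisL1 Φ₂ Cs ≠ ⊤ := (lt_of_le_of_lt (le_add_self.trans hmin) hfin).ne
  have hN1 : analysisL1 Φ₁ h ≠ ⊤ := by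
    have hle := analysisL1_le_add Φ₁ h P
    rw [add_comm h P, hWPh] at hle
    exact (hle.trans_lt (by rw [ENNReal.add_lt_top]; exact ⟨hWfin.lt_top, hPfin.lt_top⟩)).ne
  have hN2 : analysisL1 Φ₂ h ≠ ⊤ := by
    have hle := analysisL1_le_add Φ₂ h Cs
    have hhCs : h + Cs = C := by rw [hh, sub_add_eq_add_sub, hsum]; abel
    rw [hhCs] at hle
    exact (hle.trans_lt (by rw [ENNReal.add_lt_top]; exact ⟨hCfin.lt_top, hCsfin.lt_top⟩)).ne
  set a1 := analysisL1On Φ₁ S₁ h with ha1def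
  set b1 := analysisL1On Φ₁ S₁ᶜ h with hb1def
  set a2 := analysisL1On Φ₂ S₂ h with ha2def
  set b2 := analysisL1On Φ₂ S₂ᶜ h with hb2def
  set p1 := analysisL1On Φ₁ S₁ P with hp1def
  set q1 := analysisL1On Φ₁ S₁ᶜ P with hq1def
  set c2 := analysisL1On Φ₂ S₂ C with hc2def
  set d2 := analysisL1On Φ₂ S₂ᶜ C with hd2def
  have step1 : b1 ≤ analysisL1On Φ₁ S₁ᶜ W + q1 := by
    have := analysisL1On_le_add Φ₁ S₁ᶜ h P
    rwa [add_comm h P, hWPh] at this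
  have step2 : p1 ≤ analysisL1On Φ₁ S₁ W + a1 := by
    have := analysisL1On_le_add Φ₁ S₁ P h
    rwa [hWPh] at this
  have step3 : b2 ≤ analysisL1On Φ₂ S₂ᶜ Cs + d2 := by
    have := analysisL1On_le_add Φ₂ S₂ᶜ (-h) C
    rwa [add_comm (-h) C, hCsh, analysisL1On_neg] at this
  have step4 : c2 ≤ analysisL1On Φ₂ S₂ Cs + a2 := by
    have := analysisL1On_le_add Φ₂ S₂ C (-h)
    rwa [hCsh, analysisL1On_neg] at this
  have hPCfin : p1 + c2 ≠ ⊤ := by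
    have hle : p1 + c2 ≤ analysisL1 Φ₁ P + analysisL1 Φ₂ C :=
      add_le_add (analysisL1On_le_analysisL1 _ _ _) (analysisL1On_le_analysisL1 _ _ _)
    exact (hle.trans_lt hfin).ne
  have big : (b1 + b2) + (p1 + c2) ≤ (a1 + a2 + 2*(q1+d2)) + (p1 + c2) := by
    calc (b1 + b2) + (p1 + c2)
        ≤ ((analysisL1On Φ₁ S₁ᶜ W + q1) + (analysisL1On Φ₂ S₂ᶜ Cs + d2))
          + ((analysisL1On Φ₁ S₁ W + a1) + (analysisL1On Φ₂ S₂ Cs + a2)) :=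
          add_le_add (add_le_add step1 step3) (add_le_add step2 step4)
      _ = (analysisL1 Φ₁ W + analysisL1 Φ₂ Cs) + (q1 + d2) + (a1 + a2) := by
          rw [analysisL1_eq_add_compl Φ₁ S₁ W, analysisL1_eq_add_compl Φ₂ S₂ Cs]; ring
      _ ≤ (analysisL1 Φ₁ P + analysisL1 Φ₂ C) + (q1 + d2) + (a1 + a2) := by gcongr
      _ = (a1 + a2 + 2*(q1+d2)) + (p1 + c2) := by
          rw [analysisL1_eq_add_compl Φ₁ S₁ P, analysisL1_eq_add_compl Φ₂ S₂ C]; ring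
  have key1 : b1 + b2 ≤ a1 + a2 + 2*(q1 + d2) :=
    (ENNReal.add_le_add_iff_right hPCfin).1 big
  set N := analysisL1 Φ₁ h + analysisL1 Φ₂ h with hN
  have hNfin : N ≠ ⊤ := by
    rw [hN, ← lt_top_iff_ne_top, ENNReal.add_lt_top]
    exact ⟨hN1.lt_top, hN2.lt_top⟩
  have ha1 : a1 ≤ 8⁻¹ * N := by
    calc a1 ≤ clusterCoherence Φ₁ Φ₂ S₁ * analysisL1 Φ₂ h :=
          analysisL1On_le_coherence Φ₁ hΦ₂ S₁ h
      _ ≤ 8⁻¹ * N := mul_le_mul' hμ₁ le_add_self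
  have ha2 : a2 ≤ 8⁻¹ * N := by
    calc a2 ≤ clusterCoherence Φ₂ Φ₁ S₂ * analysisL1 Φ₁ h :=
          analysisL1On_le_coherence Φ₂ hΦ₁ S₂ h
      _ ≤ 8⁻¹ * N := mul_le_mul' hμ₂ le_self_add
  have heights : (8:ℝ≥0∞)⁻¹ + 8⁻¹ + (8⁻¹ + 8⁻¹) = 2⁻¹ := by
    rw [show (8:ℝ≥0∞) = ((8:ℝ≥0):ℝ≥0∞) by norm_cast,
        show (2:ℝ≥0∞) = ((2:ℝ≥0):ℝ≥0∞) by norm_cast,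
        ← ENNReal.coe_inv (by norm_num), ← ENNReal.coe_inv (by norm_num),
        ← ENNReal.coe_add, ← ENNReal.coe_add, ENNReal.coe_inj]
    apply NNReal.coe_injective
    push_cast
    norm_num
  have hNle : N ≤ 2⁻¹ * N + 2*(q1 + d2) := by
    calc N = (a1 + b1) + (a2 + b2) := by
          rw [hN, analysisL1_eq_add_compl Φ₁ S₁ h, analysisL1_eq_add_compl Φ₂ S₂ h]
      _ = (a1 + a2) + (b1 + b2) := by ring
      _ ≤ (a1 + a2) + (a1 + a2 + 2*(q1+d2)) := add_le_add le_rfl key1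
      _ = ((a1 + a2) + (a1 + a2)) + 2*(q1+d2) := by ring
      _ ≤ ((8⁻¹*N + 8⁻¹*N) + (8⁻¹*N + 8⁻¹*N)) + 2*(q1+d2) := by
          gcongr
      _ = 2⁻¹ * N + 2*(q1+d2) := by
          rw [← add_mul, ← add_mul, heights]
  have hhalf_fin : 2⁻¹ * N ≠ ⊤ := ENNReal.mul_ne_top (by norm_num) hNfin
  have half : 2⁻¹ * N ≤ 2 * (q1 + d2) := by
    refine (ENNReal.add_le_add_iff_left hhalf_fin).1 ?_
    calc 2⁻¹*N + 2⁻¹*N = N := by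
          rw [← add_mul, ENNReal.inv_two_add_inv_two, one_mul]
      _ ≤ 2⁻¹ * N + 2*(q1+d2) := hNle
  have hNδ : N ≤ 4 * (q1 + d2) := by
    calc N = 2 * (2⁻¹ * N) := by
          rw [← mul_assoc, ENNReal.mul_inv_cancel (by norm_num) (by norm_num), one_mul]
      _ ≤ 2 * (2 * (q1+d2)) := by gcongr
      _ = 4 * (q1+d2) := by rw [← mul_assoc]; norm_num
  have hfinal : ENNReal.ofReal (‖W - P‖ + ‖Cs - C‖) ≤ N := by
    have hWP : W - P = h := hh.symm
    rw [hWP, hCsC, norm_neg, ENNReal.ofReal_add (norm_nonneg _) (norm_nonneg _), hN]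
    exact add_le_add (ofReal_norm_le_analysisL1 hΦ₁ h) (ofReal_norm_le_analysisL1 hΦ₂ h)
  exact hfinal.trans hNδ

/-- Corollary 2.5: asymptotically negligible cluster coherence and cluster approximation
errors yield asymptotically near-perfect separation by `ℓ₁` minimization. -/
theorem asymptotic_separation
    [CompleteSpace H] [SecondCountableTopology H]
    {I₁ I₂ : Type*} [Countable I₁] [Countable I₂]
    (Φ₁ : I₁ → H) (Φ₂ : I₂ → H)
    (hΦ₁ : IsParsevalFrame Φ₁) (hΦ₂ : IsParsevalFrame Φ₂)
    (f P C : ℕ → H) (hf : ∀ j, f j = P j + C j) (hne : ∀ j, f j ≠ 0)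
    (hfin : ∀ j, analysisL1 Φ₁ (P j) + analysisL1 Φ₂ (C j) < ⊤)
    (S₁ : ℕ → Set I₁) (S₂ : ℕ → Set I₂)
    (W Cs : ℕ → H) (hsum : ∀ j, W j + Cs j = f j)
    (hmin : ∀ j, ∀ T₁ T₂ : H, T₁ + T₂ = f j →
      analysisL1 Φ₁ (W j) + analysisL1 Φ₂ (Cs j) ≤ analysisL1 Φ₁ T₁ + analysisL1 Φ₂ T₂)
    (hμ₁ : Tendsto (fun j => clusterCoherence Φ₁ Φ₂ (S₁ j)) atTop (nhds 0))
    (hμ₂ : Tendsto (fun j => clusterCoherence Φ₂ Φ₁ (S₂ j)) atTop (nhds 0))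
    (hδ : Tendsto (fun j =>
        (analysisL1On Φ₁ (S₁ j)ᶜ (P j) + analysisL1On Φ₂ (S₂ j)ᶜ (C j)) /
          ENNReal.ofReal ‖f j‖) atTop (nhds 0)) :
    Tendsto (fun j => (‖W j - P j‖ + ‖Cs j - C j‖) / ‖f j‖) atTop (nhds 0) := by
  have hev : ∀ᶠ j in atTop, ENNReal.ofReal (‖W j - P j‖ + ‖Cs j - C j‖) ≤
      4 * (analysisL1On Φ₁ (S₁ j)ᶜ (P j) + analysisL1On Φ₂ (S₂ j)ᶜ (C j)) := by
    filter_upwards [hμ₁.eventually (gt_mem_nhds (show (0:ℝ≥0∞) < 8⁻¹ by norm_num)),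
      hμ₂.eventually (gt_mem_nhds (show (0:ℝ≥0∞) < 8⁻¹ by norm_num))] with j h1 h2
    exact key_bound hΦ₁ hΦ₂ (by rw [hsum j, hf j]) (hfin j)
      (hmin j (P j) (C j) (hf j).symm) h1.le h2.le
  have h4 : Tendsto (fun j =>
      4 * ((analysisL1On Φ₁ (S₁ j)ᶜ (P j) + analysisL1On Φ₂ (S₂ j)ᶜ (C j)) /
        ENNReal.ofReal ‖f j‖)) atTop (nhds 0) := by
    have := ENNReal.Tendsto.const_mul (a := 4) hδ (Or.inr (by norm_num))
    simpa using this
  have hof : Tendsto (fun j => ENNReal.ofReal ((‖W j - P j‖ + ‖Cs j - C j‖) / ‖f j‖))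
      atTop (nhds 0) := by
    apply tendsto_of_tendsto_of_tendsto_of_le_of_le' (tendsto_const_nhds (x := (0:ℝ≥0∞))) h4
      (Eventually.of_forall fun j => zero_le)
    filter_upwards [hev] with j hj
    have hfpos : (0:ℝ) < ‖f j‖ := norm_pos_iff.2 (hne j)
    rw [ENNReal.ofReal_div_of_pos hfpos, ← mul_div_assoc]
    exact ENNReal.div_le_div_right hj _
  have hcomp := (ENNReal.tendsto_toReal (show (0:ℝ≥0∞) ≠ ⊤ by simp)).comp hof
  simp only [ENNReal.toReal_zero] at hcomp
  refine hcomp.congr fun j => ?_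
  exact ENNReal.toReal_ofReal (by positivity)
end
end

section
/- Let H be a separable Hilbert space, let Φ₁ = (φ_{1,i})_{i∈I₁} and Φ₂ = (φ_{2,i})_{i∈I₂} be Parseval frames in H, let S₁ ⊆ I₁, S₂ ⊆ I₂, δ ≥ 0, ε ≥ 0, and suppose κ := κ(S₁,S₂) < 1/2. Suppose S̃ = S₁⁰ + S₂⁰ + n where ‖Φ₁ᵀS₁⁰‖₁ + ‖Φ₂ᵀS₂⁰‖₁ < ∞, ‖1_{S₁ᶜ}Φ₁ᵀS₁⁰‖₁ + ‖1_{S₂ᶜ}Φ₂ᵀS₂⁰‖₁ ≤ δ, and the noise term n ∈ H satisfies ‖Φ₁ᵀn‖₁ ≤ ε or ‖Φ₂ᵀn‖₁ ≤ ε. Let (S̃₁⋆, S̃₂⋆) be a minimizer of ‖Φ₁ᵀT₁‖₁ + ‖Φ₂ᵀT₂‖₁ over all pairs with T₁ + T₂ = S̃. Then ‖S̃₁⋆ − S₁⁰‖ + ‖S̃₂⋆ − S₂⁰‖ ≤ (2δ + 5ε)/(1 − 2κ). -/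
open scoped ENNReal NNReal

noncomputable section

variable {H : Type*} [NormedAddCommGroup H] [InnerProductSpace ℂ H]

namespace SepAux

variable {I : Type*} (Φ : I → H)

lemma aL1_neg (f : H) : analysisL1 Φ (-f) = analysisL1 Φ f := by
  unfold analysisL1
  congr 1; funext i; rw [inner_neg_right, nnnorm_neg]

lemma aOn_neg (S : Set I) (f : H) : analysisL1On Φ S (-f) = analysisL1On Φ S f := by
  unfold analysisL1On
  congr 1; funext i; rw [inner_neg_right, nnnorm_neg]

lemma aL1_sub_le (f g : H) :
    analysisL1 Φ (f - g) ≤ analysisL1 Φ f + analysisL1 Φ g := by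
  unfold analysisL1
  rw [← ENNReal.tsum_add]
  refine ENNReal.tsum_le_tsum fun i => ?_
  calc (‖(inner ℂ (Φ i) (f - g) : ℂ)‖₊ : ℝ≥0∞)
      = (‖(inner ℂ (Φ i) f - inner ℂ (Φ i) g : ℂ)‖₊ : ℝ≥0∞) := by rw [inner_sub_right]
    _ ≤ (‖(inner ℂ (Φ i) f : ℂ)‖₊ : ℝ≥0∞) + (‖(inner ℂ (Φ i) g : ℂ)‖₊ : ℝ≥0∞) := by
        exact_mod_cast nnnorm_sub_le _ _

lemma aOn_sub_le (S : Set I) (f g : H) :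
    analysisL1On Φ S (f - g) ≤ analysisL1On Φ S f + analysisL1On Φ S g := by
  unfold analysisL1On
  rw [← ENNReal.tsum_add]
  refine ENNReal.tsum_le_tsum fun i => ?_
  calc (‖(inner ℂ (Φ (i : I)) (f - g) : ℂ)‖₊ : ℝ≥0∞)
      = (‖(inner ℂ (Φ (i : I)) f - inner ℂ (Φ (i : I)) g : ℂ)‖₊ : ℝ≥0∞) := by rw [inner_sub_right]
    _ ≤ _ + _ := by exact_mod_cast nnnorm_sub_le _ _

lemma aOn_add_compl (S : Set I) (f : H) :
    analysisL1On Φ S f + analysisL1On Φ Sᶜ f = analysisL1 Φ f := by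
  unfold analysisL1On analysisL1
  rw [tsum_subtype S (fun i => (‖(inner ℂ (Φ i) f : ℂ)‖₊ : ℝ≥0∞)),
    tsum_subtype (Sᶜ) (fun i => (‖(inner ℂ (Φ i) f : ℂ)‖₊ : ℝ≥0∞)), ← ENNReal.tsum_add]
  congr 1; funext i
  by_cases h : i ∈ S <;> simp [h]

lemma aOn_le (S : Set I) (f : H) : analysisL1On Φ S f ≤ analysisL1 Φ f := by
  rw [← aOn_add_compl Φ S f]; exact le_self_add

lemma nnnorm_le_aL1 (hΦ : IsParsevalFrame Φ) (f : H) :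
    (‖f‖₊ : ℝ≥0∞) ≤ analysisL1 Φ f := by
  by_cases ht : analysisL1 Φ f = ⊤
  · exact ht ▸ le_top
  have hsa : Summable (fun i => ‖(inner ℂ (Φ i) f : ℂ)‖₊) :=
    ENNReal.tsum_coe_ne_top_iff_summable.1 ht
  set b : I → ℝ := fun i => ‖(inner ℂ (Φ i) f : ℂ)‖ with hbdef
  have hsb : Summable b := by
    have := NNReal.summable_coe.2 hsa
    simpa [hbdef] using this
  have hb0 : ∀ i, 0 ≤ b i := fun i => norm_nonneg _
  have hc0 : 0 ≤ ∑' i, b i := tsum_nonneg hb0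
  have key : ‖f‖ ≤ ∑' i, b i := by
    by_cases hsq : Summable fun i => b i ^ 2
    · have hle : ∀ i, b i ^ 2 ≤ b i * ∑' j, b j := by
        intro i
        have : b i ≤ ∑' j, b j := Summable.le_tsum hsb i fun j _ => hb0 j
        calc b i ^ 2 = b i * b i := sq (b i) ▸ rfl
          _ ≤ b i * ∑' j, b j := by
              exact mul_le_mul_of_nonneg_left this (hb0 i)
      have h2 : ∑' i, b i ^ 2 ≤ (∑' i, b i) ^ 2 := by
        calc ∑' i, b i ^ 2 ≤ ∑' i, b i * ∑' j, b j :=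
              Summable.tsum_le_tsum hle hsq (hsb.mul_right _)
          _ = (∑' i, b i) * ∑' j, b j := hsb.tsum_mul_right _
          _ = (∑' i, b i) ^ 2 := (sq _).symm
      have hn2 : ‖f‖ ^ 2 ≤ (∑' i, b i) ^ 2 := by rw [← hΦ f]; exact h2
      nlinarith [norm_nonneg f]
    · have : ‖f‖ ^ 2 = 0 := by rw [← hΦ f, tsum_eq_zero_of_not_summable hsq]
      have : ‖f‖ = 0 := by nlinarith [norm_nonneg f]
      rw [this]; exact hc0
  have : ENNReal.ofReal ‖f‖ ≤ ENNReal.ofReal (∑' i, b i) := ENNReal.ofReal_le_ofReal key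
  calc (‖f‖₊ : ℝ≥0∞) = ENNReal.ofReal ‖f‖ := (ofReal_norm f).symm
    _ ≤ ENNReal.ofReal (∑' i, b i) := this
    _ = analysisL1 Φ f := by
        unfold analysisL1
        rw [← ENNReal.coe_tsum hsa, ← ENNReal.ofReal_coe_nnreal]
        congr 1
        rw [NNReal.coe_tsum]
        simp [hbdef]

lemma aL1_add_le (f g : H) :
    analysisL1 Φ (f + g) ≤ analysisL1 Φ f + analysisL1 Φ g := by
  have := aL1_sub_le Φ f (-g)
  rwa [sub_neg_eq_add, aL1_neg] at this

lemma aOn_add_le (S : Set I) (f g : H) :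
    analysisL1On Φ S (f + g) ≤ analysisL1On Φ S f + analysisL1On Φ S g := by
  have := aOn_sub_le Φ S f (-g)
  rwa [sub_neg_eq_add, aOn_neg] at this

end SepAux

namespace SepAux

lemma kappa_mul {I₁ I₂ : Type*} (Φ₁ : I₁ → H) (Φ₂ : I₂ → H) (S₁ : Set I₁) (S₂ : Set I₂)
    (f : H) (hfin : analysisL1 Φ₁ f + analysisL1 Φ₂ f ≠ ⊤) :
    analysisL1On Φ₁ S₁ f + analysisL1On Φ₂ S₂ f ≤
      jointConcentration Φ₁ Φ₂ S₁ S₂ * (analysisL1 Φ₁ f + analysisL1 Φ₂ f) := by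
  rcases eq_zero_or_pos (analysisL1 Φ₁ f + analysisL1 Φ₂ f) with h0 | hpos
  · rcases add_eq_zero.1 h0 with ⟨h1, h2⟩
    have e1 : analysisL1On Φ₁ S₁ f = 0 :=
      le_antisymm (h1 ▸ aOn_le Φ₁ S₁ f) zero_le
    have e2 : analysisL1On Φ₂ S₂ f = 0 :=
      le_antisymm (h2 ▸ aOn_le Φ₂ S₂ f) zero_le
    simp [e1, e2]
  · have hlt : analysisL1 Φ₁ f + analysisL1 Φ₂ f < ⊤ := lt_top_iff_ne_top.2 hfin
    have hle : (analysisL1On Φ₁ S₁ f + analysisL1On Φ₂ S₂ f) /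
        (analysisL1 Φ₁ f + analysisL1 Φ₂ f) ≤ jointConcentration Φ₁ Φ₂ S₁ S₂ := by
      unfold jointConcentration
      exact le_iSup (fun g : {f : H // 0 < analysisL1 Φ₁ f + analysisL1 Φ₂ f ∧
          analysisL1 Φ₁ f + analysisL1 Φ₂ f < ⊤} =>
          (analysisL1On Φ₁ S₁ (g : H) + analysisL1On Φ₂ S₂ (g : H)) /
            (analysisL1 Φ₁ (g : H) + analysisL1 Φ₂ (g : H))) ⟨f, hpos, hlt⟩
    calc analysisL1On Φ₁ S₁ f + analysisL1On Φ₂ S₂ f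
        = (analysisL1On Φ₁ S₁ f + analysisL1On Φ₂ S₂ f) /
            (analysisL1 Φ₁ f + analysisL1 Φ₂ f) * (analysisL1 Φ₁ f + analysisL1 Φ₂ f) :=
          (ENNReal.div_mul_cancel hpos.ne' hfin).symm
      _ ≤ jointConcentration Φ₁ Φ₂ S₁ S₂ * (analysisL1 Φ₁ f + analysisL1 Φ₂ f) :=
          mul_le_mul_left hle _

lemma jc_le {I₁ I₂ : Type*} (Φ₁ : I₁ → H) (Φ₂ : I₂ → H) (S₁ : Set I₁) (S₂ : Set I₂) :
    jointConcentration Φ₁ Φ₂ S₁ S₂ ≤ jointConcentration Φ₂ Φ₁ S₂ S₁ := by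
  unfold jointConcentration
  refine iSup_le fun x => ?_
  obtain ⟨f, h1, h2⟩ := x
  refine le_iSup_of_le (⟨f, by rwa [add_comm], by rwa [add_comm]⟩ :
    {f : H // 0 < analysisL1 Φ₂ f + analysisL1 Φ₁ f ∧
      analysisL1 Φ₂ f + analysisL1 Φ₁ f < ⊤}) ?_
  exact le_of_eq (by congr 1 <;> exact add_comm _ _)

lemma core {I₁ I₂ : Type*}
    (Φ₁ : I₁ → H) (Φ₂ : I₂ → H)
    (hΦ₁ : IsParsevalFrame Φ₁) (hΦ₂ : IsParsevalFrame Φ₂)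
    (S₁ : Set I₁) (S₂ : Set I₂) (δ ε : ℝ) (hδ : 0 ≤ δ) (hε : 0 ≤ ε)
    (hκ : jointConcentration Φ₁ Φ₂ S₁ S₂ < 1 / 2)
    (St S₁0 S₂0 n : H) (hSt : St = S₁0 + S₂0 + n)
    (hfin : analysisL1 Φ₁ S₁0 + analysisL1 Φ₂ S₂0 < ⊤)
    (hsparse : analysisL1On Φ₁ S₁ᶜ S₁0 + analysisL1On Φ₂ S₂ᶜ S₂0 ≤ ENNReal.ofReal δ)
    (hnoise : analysisL1 Φ₁ n ≤ ENNReal.ofReal ε)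
    (S₁s S₂s : H) (hsum : S₁s + S₂s = St)
    (hmin : ∀ T₁ T₂ : H, T₁ + T₂ = St →
      analysisL1 Φ₁ S₁s + analysisL1 Φ₂ S₂s ≤ analysisL1 Φ₁ T₁ + analysisL1 Φ₂ T₂) :
    ‖S₁s - S₁0‖ + ‖S₂s - S₂0‖ ≤
      (2 * δ + 5 * ε) / (1 - 2 * (jointConcentration Φ₁ Φ₂ S₁ S₂).toReal) := by
  set κ := jointConcentration Φ₁ Φ₂ S₁ S₂ with hκdef
  have hκtop : κ ≠ ⊤ := hκ.ne_top
  have hκ1 : κ ≤ 1 := hκ.le.trans (by norm_num)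
  set ε' := ENNReal.ofReal ε with hε'def
  set δ' := ENNReal.ofReal δ with hδ'def
  have hε't : ε' ≠ ⊤ := ENNReal.ofReal_ne_top
  have hδ't : δ' ≠ ⊤ := ENNReal.ofReal_ne_top
  set h₁ := S₁s - S₁0 with hh₁def
  set h₂ := S₂s - S₂0 with hh₂def
  have hA10 : analysisL1 Φ₁ S₁0 ≠ ⊤ := (le_self_add.trans_lt hfin).ne
  have hA20 : analysisL1 Φ₂ S₂0 ≠ ⊤ := (le_add_self.trans_lt hfin).ne
  -- Step A: minimality applied to (S₁0 + n, S₂0)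
  have stepA : analysisL1 Φ₁ S₁s + analysisL1 Φ₂ S₂s ≤
      analysisL1 Φ₁ S₁0 + analysisL1 Φ₂ S₂0 + ε' := by
    have hm := hmin (S₁0 + n) S₂0 (by rw [hSt]; abel)
    refine hm.trans ?_
    have h1 : analysisL1 Φ₁ (S₁0 + n) ≤ analysisL1 Φ₁ S₁0 + ε' :=
      (aL1_add_le Φ₁ S₁0 n).trans (add_le_add_right hnoise _)
    calc analysisL1 Φ₁ (S₁0 + n) + analysisL1 Φ₂ S₂0
        ≤ (analysisL1 Φ₁ S₁0 + ε') + analysisL1 Φ₂ S₂0 := add_le_add_left h1 _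
      _ = analysisL1 Φ₁ S₁0 + analysisL1 Φ₂ S₂0 + ε' := by ring
  have hRfin : analysisL1 Φ₁ S₁0 + analysisL1 Φ₂ S₂0 + ε' ≠ ⊤ :=
    ENNReal.add_ne_top.2 ⟨ENNReal.add_ne_top.2 ⟨hA10, hA20⟩, hε't⟩
  have hA1s : analysisL1 Φ₁ S₁s ≠ ⊤ :=
    ((le_self_add.trans stepA).trans_lt (lt_top_iff_ne_top.2 hRfin)).ne
  have hA2s : analysisL1 Φ₂ S₂s ≠ ⊤ :=
    ((le_add_self.trans stepA).trans_lt (lt_top_iff_ne_top.2 hRfin)).ne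
  have hh1le : analysisL1 Φ₁ h₁ ≤ analysisL1 Φ₁ S₁s + analysisL1 Φ₁ S₁0 := aL1_sub_le Φ₁ _ _
  have hh2le : analysisL1 Φ₂ h₂ ≤ analysisL1 Φ₂ S₂s + analysisL1 Φ₂ S₂0 := aL1_sub_le Φ₂ _ _
  have hA1h : analysisL1 Φ₁ h₁ ≠ ⊤ :=
    (hh1le.trans_lt (lt_top_iff_ne_top.2 (ENNReal.add_ne_top.2 ⟨hA1s, hA10⟩))).ne
  have hA2h : analysisL1 Φ₂ h₂ ≠ ⊤ :=
    (hh2le.trans_lt (lt_top_iff_ne_top.2 (ENNReal.add_ne_top.2 ⟨hA2s, hA20⟩))).ne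
  set L := analysisL1 Φ₁ h₁ + analysisL1 Φ₂ h₂ with hLdef
  have hLt : L ≠ ⊤ := ENNReal.add_ne_top.2 ⟨hA1h, hA2h⟩
  -- abbreviations
  set x1 := analysisL1On Φ₁ S₁ᶜ h₁
  set x2 := analysisL1On Φ₂ S₂ᶜ h₂
  set y1 := analysisL1On Φ₁ S₁ h₁
  set y2 := analysisL1On Φ₂ S₂ h₂
  set p1 := analysisL1On Φ₁ S₁ S₁s
  set q1 := analysisL1On Φ₁ S₁ᶜ S₁s
  set p2 := analysisL1On Φ₂ S₂ S₂s
  set q2 := analysisL1On Φ₂ S₂ᶜ S₂s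
  set r1 := analysisL1On Φ₁ S₁ S₁0
  set s1 := analysisL1On Φ₁ S₁ᶜ S₁0
  set r2 := analysisL1On Φ₂ S₂ S₂0
  set s2 := analysisL1On Φ₂ S₂ᶜ S₂0
  have hx1 : x1 ≤ q1 + s1 := aOn_sub_le Φ₁ S₁ᶜ S₁s S₁0
  have hx2 : x2 ≤ q2 + s2 := aOn_sub_le Φ₂ S₂ᶜ S₂s S₂0
  have hr1 : r1 ≤ p1 + y1 := by
    have := aOn_sub_le Φ₁ S₁ S₁s h₁
    rwa [show S₁s - h₁ = S₁0 by rw [hh₁def]; abel] at this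
  have hr2 : r2 ≤ p2 + y2 := by
    have := aOn_sub_le Φ₂ S₂ S₂s h₂
    rwa [show S₂s - h₂ = S₂0 by rw [hh₂def]; abel] at this
  have hsplit1s : p1 + q1 = analysisL1 Φ₁ S₁s := aOn_add_compl Φ₁ S₁ S₁s
  have hsplit2s : p2 + q2 = analysisL1 Φ₂ S₂s := aOn_add_compl Φ₂ S₂ S₂s
  have hsplit10 : r1 + s1 = analysisL1 Φ₁ S₁0 := aOn_add_compl Φ₁ S₁ S₁0
  have hsplit20 : r2 + s2 = analysisL1 Φ₂ S₂0 := aOn_add_compl Φ₂ S₂ S₂0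
  have hrfin : r1 + r2 ≠ ⊤ :=
    ((add_le_add (aOn_le Φ₁ S₁ S₁0) (aOn_le Φ₂ S₂ S₂0)).trans_lt hfin).ne
  have stepC : x1 + x2 ≤ 2 * δ' + ε' + (y1 + y2) := by
    have main : (x1 + x2) + (r1 + r2) ≤ (2 * δ' + ε' + (y1 + y2)) + (r1 + r2) := by
      calc (x1 + x2) + (r1 + r2)
          ≤ ((q1 + s1) + (q2 + s2)) + ((p1 + y1) + (p2 + y2)) :=
            add_le_add (add_le_add hx1 hx2) (add_le_add hr1 hr2)
        _ = ((p1 + q1) + (p2 + q2)) + (s1 + s2) + (y1 + y2) := by ring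
        _ = (analysisL1 Φ₁ S₁s + analysisL1 Φ₂ S₂s) + (s1 + s2) + (y1 + y2) := by
            rw [hsplit1s, hsplit2s]
        _ ≤ (analysisL1 Φ₁ S₁0 + analysisL1 Φ₂ S₂0 + ε') + δ' + (y1 + y2) :=
            add_le_add (add_le_add stepA hsparse) le_rfl
        _ = ((r1 + s1) + (r2 + s2) + ε') + δ' + (y1 + y2) := by
            rw [hsplit10, hsplit20]
        _ = ((r1 + r2) + (s1 + s2)) + ε' + δ' + (y1 + y2) := by ring
        _ ≤ ((r1 + r2) + δ') + ε' + δ' + (y1 + y2) :=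
            add_le_add_left (add_le_add_left (add_le_add_left
              (add_le_add_right hsparse _) _) _) _
        _ = (2 * δ' + ε' + (y1 + y2)) + (r1 + r2) := by ring
    exact (ENNReal.add_le_add_iff_right hrfin).1 main
  -- Step D
  have hsum2 : h₁ + h₂ = n := by
    have e : S₁s + S₂s = S₁0 + S₂0 + n := hsum.trans hSt
    rw [hh₁def, hh₂def, sub_add_sub_comm, e]; abel
  set h := h₁ - n with hhdef
  have hhneg : h = -h₂ := by rw [hhdef, ← hsum2]; abel
  have hD1 : y1 ≤ analysisL1On Φ₁ S₁ h + ε' := by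
    have e : h₁ = h + n := by rw [hhdef]; abel
    calc y1 = analysisL1On Φ₁ S₁ (h + n) := by rw [← e]
      _ ≤ analysisL1On Φ₁ S₁ h + analysisL1On Φ₁ S₁ n := aOn_add_le Φ₁ S₁ h n
      _ ≤ analysisL1On Φ₁ S₁ h + ε' :=
          add_le_add_right ((aOn_le Φ₁ S₁ n).trans hnoise) _
  have hD2 : y2 = analysisL1On Φ₂ S₂ h := by rw [hhneg, aOn_neg]
  have hA1hh : analysisL1 Φ₁ h ≤ analysisL1 Φ₁ h₁ + ε' :=
    (aL1_sub_le Φ₁ h₁ n).trans (add_le_add_right hnoise _)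
  have hA2hh : analysisL1 Φ₂ h = analysisL1 Φ₂ h₂ := by rw [hhneg, aL1_neg]
  have hDfin : analysisL1 Φ₁ h + analysisL1 Φ₂ h ≠ ⊤ := by
    have : analysisL1 Φ₁ h + analysisL1 Φ₂ h ≤ (analysisL1 Φ₁ h₁ + ε') + analysisL1 Φ₂ h₂ :=
      add_le_add hA1hh hA2hh.le
    exact (this.trans_lt (lt_top_iff_ne_top.2 (ENNReal.add_ne_top.2
      ⟨ENNReal.add_ne_top.2 ⟨hA1h, hε't⟩, hA2h⟩))).ne
  have stepD : y1 + y2 ≤ κ * L + 2 * ε' := by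
    calc y1 + y2 ≤ (analysisL1On Φ₁ S₁ h + ε') + analysisL1On Φ₂ S₂ h :=
          add_le_add hD1 hD2.le
      _ = (analysisL1On Φ₁ S₁ h + analysisL1On Φ₂ S₂ h) + ε' := by ring
      _ ≤ κ * (analysisL1 Φ₁ h + analysisL1 Φ₂ h) + ε' :=
          add_le_add_left (kappa_mul Φ₁ Φ₂ S₁ S₂ h hDfin) _
      _ ≤ κ * ((analysisL1 Φ₁ h₁ + ε') + analysisL1 Φ₂ h₂) + ε' :=
          add_le_add_left (mul_le_mul_right (add_le_add hA1hh hA2hh.le) _) _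
      _ = κ * (L + ε') + ε' := by rw [hLdef]; ring_nf
      _ = κ * L + κ * ε' + ε' := by ring
      _ ≤ κ * L + 1 * ε' + ε' :=
          add_le_add_left (add_le_add_right (mul_le_mul_left hκ1 _) _) _
      _ = κ * L + 2 * ε' := by ring
  have hLsplit : L = (y1 + y2) + (x1 + x2) := by
    rw [hLdef, ← aOn_add_compl Φ₁ S₁ h₁, ← aOn_add_compl Φ₂ S₂ h₂]; ring
  have key : L ≤ 2 * κ * L + (2 * δ' + 5 * ε') := by
    calc L = (y1 + y2) + (x1 + x2) := hLsplit
      _ ≤ (y1 + y2) + (2 * δ' + ε' + (y1 + y2)) := add_le_add_right stepC _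
      _ = 2 * (y1 + y2) + 2 * δ' + ε' := by ring
      _ ≤ 2 * (κ * L + 2 * ε') + 2 * δ' + ε' :=
          add_le_add_left (add_le_add_left (mul_le_mul_right stepD _) _) _
      _ = 2 * κ * L + (2 * δ' + 5 * ε') := by ring
  -- pass to real numbers
  have hRHSfin : 2 * κ * L + (2 * δ' + 5 * ε') ≠ ⊤ :=
    ENNReal.add_ne_top.2 ⟨ENNReal.mul_ne_top (ENNReal.mul_ne_top ENNReal.ofNat_ne_top hκtop) hLt,
      ENNReal.add_ne_top.2 ⟨ENNReal.mul_ne_top ENNReal.ofNat_ne_top hδ't,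
        ENNReal.mul_ne_top ENNReal.ofNat_ne_top hε't⟩⟩
  have keyR := ENNReal.toReal_mono hRHSfin key
  set kr := κ.toReal with hkrdef
  have hkr : kr < 1 / 2 := by
    have := ENNReal.toReal_strict_mono (by norm_num : (1 / 2 : ℝ≥0∞) ≠ ⊤) hκ
    simpa using this
  have hkr0 : 0 ≤ kr := ENNReal.toReal_nonneg
  have keyR' : L.toReal ≤ 2 * kr * L.toReal + (2 * δ + 5 * ε) := by
    have e : (2 * κ * L + (2 * δ' + 5 * ε')).toReal
        = 2 * kr * L.toReal + (2 * δ + 5 * ε) := by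
      rw [ENNReal.toReal_add
          (ENNReal.mul_ne_top (ENNReal.mul_ne_top ENNReal.ofNat_ne_top hκtop) hLt)
          (ENNReal.add_ne_top.2 ⟨ENNReal.mul_ne_top ENNReal.ofNat_ne_top hδ't,
            ENNReal.mul_ne_top ENNReal.ofNat_ne_top hε't⟩),
        ENNReal.toReal_add (ENNReal.mul_ne_top ENNReal.ofNat_ne_top hδ't)
          (ENNReal.mul_ne_top ENNReal.ofNat_ne_top hε't),
        ENNReal.toReal_mul, ENNReal.toReal_mul, ENNReal.toReal_mul, ENNReal.toReal_mul,
        hε'def, hδ'def, ENNReal.toReal_ofReal hδ, ENNReal.toReal_ofReal hε]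
      norm_num
      exact Or.inl hkrdef.symm
    rw [e] at keyR
    exact keyR
  have hpos : 0 < 1 - 2 * kr := by linarith
  have hnorm1 : ‖h₁‖ ≤ (analysisL1 Φ₁ h₁).toReal := by
    have := ENNReal.toReal_mono hA1h (nnnorm_le_aL1 Φ₁ hΦ₁ h₁)
    simpa using this
  have hnorm2 : ‖h₂‖ ≤ (analysisL1 Φ₂ h₂).toReal := by
    have := ENNReal.toReal_mono hA2h (nnnorm_le_aL1 Φ₂ hΦ₂ h₂)
    simpa using this
  have hLsum : L.toReal = (analysisL1 Φ₁ h₁).toReal + (analysisL1 Φ₂ h₂).toReal := by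
    rw [hLdef, ENNReal.toReal_add hA1h hA2h]
  have hfinal : L.toReal ≤ (2 * δ + 5 * ε) / (1 - 2 * kr) := by
    rw [le_div_iff₀ hpos]
    nlinarith [keyR']
  calc ‖S₁s - S₁0‖ + ‖S₂s - S₂0‖ ≤ L.toReal := by
        rw [hLsum]; exact add_le_add hnorm1 hnorm2
    _ ≤ (2 * δ + 5 * ε) / (1 - 2 * kr) := hfinal

lemma jc_comm {I₁ I₂ : Type*} (Φ₁ : I₁ → H) (Φ₂ : I₂ → H) (S₁ : Set I₁) (S₂ : Set I₂) :
    jointConcentration Φ₁ Φ₂ S₁ S₂ = jointConcentration Φ₂ Φ₁ S₂ S₁ :=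
  le_antisymm (jc_le Φ₁ Φ₂ S₁ S₂) (jc_le Φ₂ Φ₁ S₂ S₁)

end SepAux


/-- Noise-robust version of the separation estimate, cf. (8.1) in the paper. -/
theorem separation_l1_minimization_noisy
    [CompleteSpace H] [SecondCountableTopology H]
    {I₁ I₂ : Type*} [Countable I₁] [Countable I₂]
    (Φ₁ : I₁ → H) (Φ₂ : I₂ → H)
    (hΦ₁ : IsParsevalFrame Φ₁) (hΦ₂ : IsParsevalFrame Φ₂)
    (S₁ : Set I₁) (S₂ : Set I₂) (δ ε : ℝ) (hδ : 0 ≤ δ) (hε : 0 ≤ ε)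
    (hκ : jointConcentration Φ₁ Φ₂ S₁ S₂ < 1 / 2)
    (St S₁0 S₂0 n : H) (hSt : St = S₁0 + S₂0 + n)
    (hfin : analysisL1 Φ₁ S₁0 + analysisL1 Φ₂ S₂0 < ⊤)
    (hsparse : analysisL1On Φ₁ S₁ᶜ S₁0 + analysisL1On Φ₂ S₂ᶜ S₂0 ≤ ENNReal.ofReal δ)
    (hnoise : analysisL1 Φ₁ n ≤ ENNReal.ofReal ε ∨ analysisL1 Φ₂ n ≤ ENNReal.ofReal ε)
    (S₁s S₂s : H) (hsum : S₁s + S₂s = St)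
    (hmin : ∀ T₁ T₂ : H, T₁ + T₂ = St →
      analysisL1 Φ₁ S₁s + analysisL1 Φ₂ S₂s ≤ analysisL1 Φ₁ T₁ + analysisL1 Φ₂ T₂) :
    ‖S₁s - S₁0‖ + ‖S₂s - S₂0‖ ≤
      (2 * δ + 5 * ε) / (1 - 2 * (jointConcentration Φ₁ Φ₂ S₁ S₂).toReal) := by
  rcases hnoise with h | h
  · exact SepAux.core Φ₁ Φ₂ hΦ₁ hΦ₂ S₁ S₂ δ ε hδ hε hκ St S₁0 S₂0 n hSt hfin hsparse h
      S₁s S₂s hsum hmin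
  · have hκ' : jointConcentration Φ₂ Φ₁ S₂ S₁ < 1 / 2 := by
      rw [← SepAux.jc_comm]; exact hκ
    have hres := SepAux.core Φ₂ Φ₁ hΦ₂ hΦ₁ S₂ S₁ δ ε hδ hε hκ' St S₂0 S₁0 n
      (by rw [hSt]; abel) (by rw [add_comm]; exact hfin) (by rw [add_comm]; exact hsparse) h
      S₂s S₁s (by rw [add_comm]; exact hsum)
      (fun T₂ T₁ hT => by
        have := hmin T₁ T₂ (by rw [← hT]; abel)
        rw [add_comm (analysisL1 Φ₂ S₂s), add_comm (analysisL1 Φ₂ T₂)]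
        exact this)
    rw [SepAux.jc_comm Φ₁ Φ₂ S₁ S₂, add_comm]
    exact hres
end
end

section
/- For every real N > 2, every x₀ ∈ ℝ, and every y₀ ≥ 0, the ray integral R_N(x₀,y₀) = ∫_{y₀}^{∞} ⟨|(x₀,t)|⟩^{−N} dt satisfies R_N(x₀,y₀) ≤ π · ⟨|x₀|⟩^{−1} · ⟨|(x₀,y₀)|⟩^{2−N}. -/
open MeasureTheory
open scoped Real

noncomputable section

/-- The analyst's bracket `⟨t⟩ = (1 + t²)^{1/2}`. -/
def jap (t : ℝ) : ℝ := Real.sqrt (1 + t ^ 2)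

/-- `⟨|(x,y)|⟩ = (1 + x² + y²)^{1/2}`. -/
def japNorm2 (x y : ℝ) : ℝ := Real.sqrt (1 + x ^ 2 + y ^ 2)

/-- The ray integral `R_N(x₀, y₀) = ∫_{y₀}^∞ ⟨|(x₀,t)|⟩^{-N} dt`. -/
def rayIntegral (N : ℝ) (x₀ y₀ : ℝ) : ℝ :=
  ∫ t in Set.Ici y₀, japNorm2 x₀ t ^ (-N)

lemma integral_inv_sq_add_sq' (a : ℝ) (ha : 0 < a) :
    ∫ t : ℝ, (a ^ 2 + t ^ 2)⁻¹ = π / a := by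
  have h1 : ∀ t : ℝ, (a ^ 2 + t ^ 2)⁻¹ = a⁻¹ ^ 2 * (1 + (a⁻¹ * t) ^ 2)⁻¹ := by
    intro t
    rw [eq_comm, inv_pow, ← mul_inv]
    congr 1
    field_simp
  simp_rw [h1]
  rw [integral_const_mul,
    MeasureTheory.Measure.integral_comp_inv_mul_left (fun x : ℝ => (1 + x ^ 2)⁻¹) a,
    integral_univ_inv_one_add_sq, abs_of_pos ha, smul_eq_mul]
  field_simp

/-- Lemma 7.7 (`rayintegral`): decay bound for the ray integral. -/
theorem rayIntegral_bound (N : ℝ) (hN : 2 < N) (x₀ y₀ : ℝ) (hy₀ : 0 ≤ y₀) :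
    rayIntegral N x₀ y₀ ≤ π * (jap |x₀|)⁻¹ * japNorm2 x₀ y₀ ^ (2 - N) := by
  have hx : (0:ℝ) < 1 + x₀ ^ 2 := by positivity
  set a : ℝ := Real.sqrt (1 + x₀ ^ 2) with ha
  have ha0 : 0 < a := Real.sqrt_pos.mpr hx
  have ha2 : a ^ 2 = 1 + x₀ ^ 2 := Real.sq_sqrt hx.le
  have hC : (0:ℝ) < 1 + x₀ ^ 2 + y₀ ^ 2 := by positivity
  set C : ℝ := (1 + x₀ ^ 2 + y₀ ^ 2) ^ ((2 - N) / 2) with hCdef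
  have hC0 : 0 < C := Real.rpow_pos_of_pos hC _
  -- integrability of the comparison function
  have hgint : Integrable (fun t : ℝ => (a ^ 2 + t ^ 2)⁻¹) := by
    refine integrable_inv_one_add_sq.mono ?_ ?_
    · exact (Measurable.inv (by fun_prop)).aestronglyMeasurable
    · filter_upwards with t
      have h1 : (0:ℝ) < 1 + t ^ 2 := by positivity
      have h2 : (0:ℝ) < a ^ 2 + t ^ 2 := by positivity
      rw [Real.norm_eq_abs, Real.norm_eq_abs, abs_of_pos (by positivity),
        abs_of_pos (by positivity)]
      apply inv_anti₀ h1
      nlinarith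
  have hgnn : (0:ℝ) ≤ ∫ t in Set.Ici y₀, (a ^ 2 + t ^ 2)⁻¹ :=
    setIntegral_nonneg measurableSet_Ici (fun t _ => by positivity)
  have hset : ∫ t in Set.Ici y₀, (a ^ 2 + t ^ 2)⁻¹ ≤ π / a := by
    rw [← integral_inv_sq_add_sq' a ha0]
    exact setIntegral_le_integral hgint (by filter_upwards with t; positivity)
  -- pointwise bound
  have hpt : ∀ t ∈ Set.Ici y₀,
      japNorm2 x₀ t ^ (-N) ≤ C * (a ^ 2 + t ^ 2)⁻¹ := by
    intro t ht
    have hSt : (0:ℝ) < 1 + x₀ ^ 2 + t ^ 2 := by positivity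
    have h1 : japNorm2 x₀ t ^ (-N) = (1 + x₀ ^ 2 + t ^ 2) ^ (-(N / 2)) := by
      rw [japNorm2, Real.sqrt_eq_rpow, ← Real.rpow_mul hSt.le]
      congr 1
      ring
    have h2 : (1 + x₀ ^ 2 + t ^ 2 : ℝ) ^ (-(N / 2)) =
        (1 + x₀ ^ 2 + t ^ 2) ^ ((2 - N) / 2) * (1 + x₀ ^ 2 + t ^ 2)⁻¹ := by
      rw [← Real.rpow_neg_one (1 + x₀ ^ 2 + t ^ 2), ← Real.rpow_add hSt]
      congr 1
      ring
    have h3 : (1 + x₀ ^ 2 + t ^ 2 : ℝ) ^ ((2 - N) / 2) ≤ C := by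
      apply Real.rpow_le_rpow_of_nonpos hC
      · nlinarith [Set.mem_Ici.mp ht]
      · linarith
    have h4 : a ^ 2 + t ^ 2 = 1 + x₀ ^ 2 + t ^ 2 := by rw [ha2]
    rw [h1, h2, h4]
    exact mul_le_mul_of_nonneg_right h3 (by positivity)
  have key : rayIntegral N x₀ y₀ ≤ C * ∫ t in Set.Ici y₀, (a ^ 2 + t ^ 2)⁻¹ := by
    rw [rayIntegral, ← integral_const_mul]
    refine integral_mono_of_nonneg ?_ ((hgint.const_mul C).restrict) ?_
    · filter_upwards with t
      exact Real.rpow_nonneg (Real.sqrt_nonneg _) _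
    · filter_upwards [ae_restrict_mem measurableSet_Ici] with t ht
      exact hpt t ht
  have hRHS : π * (jap |x₀|)⁻¹ * japNorm2 x₀ y₀ ^ (2 - N) = C * (π / a) := by
    have hj : jap |x₀| = a := by rw [jap, ha, sq_abs]
    have hjn : japNorm2 x₀ y₀ ^ (2 - N) = C := by
      rw [japNorm2, Real.sqrt_eq_rpow, ← Real.rpow_mul hC.le, hCdef]
      congr 1
      ring
    rw [hj, hjn]
    field_simp
  rw [hRHS]
  calc rayIntegral N x₀ y₀ ≤ C * ∫ t in Set.Ici y₀, (a ^ 2 + t ^ 2)⁻¹ := key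
    _ ≤ C * (π / a) := mul_le_mul_of_nonneg_left hset hC0.le
end
end

section
/- Let I and J be countable index sets, 0 < p ≤ 1, and let M = (m_{i,j})_{i∈I, j∈J} be a complex matrix with finite mixed quasi-norm ‖M‖_{Op,p} := max{ sup_{j∈J} (∑_{i∈I} |m_{i,j}|^p)^{1/p}, sup_{i∈I} (∑_{j∈J} |m_{i,j}|^p)^{1/p} } < ∞. Then for every α ∈ ℓ^p(J), the series (Mα)_i = ∑_{j∈J} m_{i,j} α_j converges absolutely for every i ∈ I, Mα ∈ ℓ^p(I), and ‖Mα‖_p ≤ ‖M‖_{Op,p} · ‖α‖_p. -/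
open scoped ENNReal NNReal

noncomputable section

/-- The mixed operator quasi-norm `‖M‖_{Op,p}`: the maximum of the suprema of the
`ℓ^p` quasi-norms of the columns and of the rows of `M`. -/
def opQuasiNorm {I J : Type*} (p : ℝ) (M : I → J → ℂ) : ℝ≥0∞ :=
  max (⨆ j : J, (∑' i : I, (‖M i j‖₊ : ℝ≥0∞) ^ p) ^ (1 / p))
    (⨆ i : I, (∑' j : J, (‖M i j‖₊ : ℝ≥0∞) ^ p) ^ (1 / p))

/-- Subadditivity of `x ↦ x ^ p` for `0 < p ≤ 1` over finite sums in `ℝ≥0∞`. -/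
lemma sum_rpow_aux {J : Type*} (f : J → ℝ≥0∞) {p : ℝ} (hp0 : 0 < p) (hp1 : p ≤ 1)
    (s : Finset J) : (∑ j ∈ s, f j) ^ p ≤ ∑ j ∈ s, f j ^ p := by
  classical
  induction s using Finset.cons_induction with
  | empty => simp [ENNReal.zero_rpow_of_pos hp0]
  | cons a s ha ih =>
      rw [Finset.sum_cons, Finset.sum_cons]
      calc (f a + ∑ j ∈ s, f j) ^ p ≤ f a ^ p + (∑ j ∈ s, f j) ^ p :=
            ENNReal.rpow_add_le_add_rpow _ _ hp0.le hp1
        _ ≤ f a ^ p + ∑ j ∈ s, f j ^ p := by exact add_le_add_right ih _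

/-- Subadditivity of `x ↦ x ^ p` for `0 < p ≤ 1` over countable sums in `ℝ≥0∞`. -/
lemma tsum_rpow_aux {J : Type*} (f : J → ℝ≥0∞) {p : ℝ} (hp0 : 0 < p) (hp1 : p ≤ 1) :
    (∑' j, f j) ^ p ≤ ∑' j, f j ^ p := by
  have key : (∑' j, f j) ≤ (∑' j, f j ^ p) ^ (1 / p) := by
    rw [ENNReal.tsum_eq_iSup_sum]
    refine iSup_le fun s => ?_
    have h1 : (∑ j ∈ s, f j) ^ p ≤ ∑' j, f j ^ p :=
      (sum_rpow_aux f hp0 hp1 s).trans (ENNReal.sum_le_tsum s)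
    have := ENNReal.rpow_le_rpow h1 (by positivity : (0:ℝ) ≤ 1 / p)
    rwa [← ENNReal.rpow_mul, mul_one_div, div_self hp0.ne', ENNReal.rpow_one] at this
  calc (∑' j, f j) ^ p ≤ ((∑' j, f j ^ p) ^ (1 / p)) ^ p :=
        ENNReal.rpow_le_rpow key hp0.le
    _ = ∑' j, f j ^ p := by
        rw [← ENNReal.rpow_mul, one_div_mul_cancel hp0.ne', ENNReal.rpow_one]

/-- Lemma 6.4: a matrix with finite mixed operator quasi-norm maps `ℓ^p` to `ℓ^p`
boundedly, for `0 < p ≤ 1`. -/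
theorem matrix_lp_operator_bound {I J : Type*} [Countable I] [Countable J]
    (p : ℝ) (hp0 : 0 < p) (hp1 : p ≤ 1)
    (M : I → J → ℂ) (hM : opQuasiNorm p M ≠ ⊤)
    (α : J → ℂ) (hα : Summable fun j => ‖α j‖ ^ p) :
    (∀ i : I, Summable fun j => ‖M i j * α j‖) ∧
      (Summable fun i => ‖∑' j, M i j * α j‖ ^ p) ∧
      (∑' i, ‖∑' j, M i j * α j‖ ^ p) ^ (1 / p) ≤
        (opQuasiNorm p M).toReal * (∑' j, ‖α j‖ ^ p) ^ (1 / p) := by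
  classical
  set C : ℝ≥0∞ := opQuasiNorm p M with hC
  -- column bound
  have hcol : ∀ j, (∑' i, (‖M i j‖₊ : ℝ≥0∞) ^ p) ≤ C ^ p := by
    intro j
    have h1 : (∑' i, (‖M i j‖₊ : ℝ≥0∞) ^ p) ^ (1 / p) ≤ C :=
      le_trans (le_iSup (fun j => (∑' i, (‖M i j‖₊ : ℝ≥0∞) ^ p) ^ (1 / p)) j)
        (le_max_left _ _)
    have := ENNReal.rpow_le_rpow h1 hp0.le
    rwa [← ENNReal.rpow_mul, one_div_mul_cancel hp0.ne', ENNReal.rpow_one] at this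
  -- row bound, entrywise
  have hrow : ∀ i j, (‖M i j‖₊ : ℝ≥0∞) ≤ C := by
    intro i j
    have h1 : (∑' j, (‖M i j‖₊ : ℝ≥0∞) ^ p) ^ (1 / p) ≤ C :=
      le_trans (le_iSup (fun i => (∑' j, (‖M i j‖₊ : ℝ≥0∞) ^ p) ^ (1 / p)) i)
        (le_max_right _ _)
    have h2 : (‖M i j‖₊ : ℝ≥0∞) ^ p ≤ C ^ p := by
      refine le_trans (ENNReal.le_tsum (f := fun j' => (‖M i j'‖₊ : ℝ≥0∞) ^ p) j) ?_
      have := ENNReal.rpow_le_rpow h1 hp0.le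
      rwa [← ENNReal.rpow_mul, one_div_mul_cancel hp0.ne', ENNReal.rpow_one] at this
    exact (ENNReal.rpow_le_rpow_iff hp0).1 h2
  have hrowR : ∀ i j, ‖M i j‖ ≤ C.toReal := by
    intro i j
    have := ENNReal.toReal_mono hM (hrow i j)
    simpa using this
  have hCtR : 0 ≤ C.toReal := ENNReal.toReal_nonneg
  -- summability of the p-th powers for each row (part 1, step 1)
  have hrowp : ∀ i, Summable fun j => ‖M i j * α j‖ ^ p := by
    intro i
    refine Summable.of_nonneg_of_le (fun j => by positivity)
      (fun j => ?_) (hα.mul_left (C.toReal ^ p))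
    rw [norm_mul, Real.mul_rpow (norm_nonneg _) (norm_nonneg _)]
    exact mul_le_mul_of_nonneg_right
      (Real.rpow_le_rpow (norm_nonneg _) (hrowR i j) hp0.le)
      (Real.rpow_nonneg (norm_nonneg _) _)
  -- part 1: ℓ^p ⊆ ℓ^1
  have part1 : ∀ i, Summable fun j => ‖M i j * α j‖ := by
    intro i
    have hq : (ENNReal.ofReal p).toReal = p := ENNReal.toReal_ofReal hp0.le
    have hmem : Memℓp (fun j => M i j * α j) (ENNReal.ofReal p) := by
      refine memℓp_gen ?_
      rw [hq]; exact hrowp i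
    have hle : (ENNReal.ofReal p) ≤ 1 := by
      rw [show (1 : ℝ≥0∞) = ENNReal.ofReal 1 by simp]
      exact ENNReal.ofReal_le_ofReal hp1
    have hmem1 : Memℓp (fun j => M i j * α j) 1 := hmem.of_exponent_ge hle
    have := hmem1.summable (by simp)
    simpa using this
  refine ⟨part1, ?_⟩
  -- ENNReal machinery
  set f : I → ℂ := fun i => ∑' j, M i j * α j with hf
  set A : ℝ≥0∞ := ∑' j, (‖α j‖₊ : ℝ≥0∞) ^ p with hA
  have hAcoe : ∀ j : J, (‖α j‖₊ : ℝ≥0∞) ^ p = ((‖α j‖₊ ^ p : ℝ≥0) : ℝ≥0∞) :=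
    fun j => (ENNReal.coe_rpow_of_nonneg _ hp0.le).symm
  have hαnn : Summable fun j => (‖α j‖₊ ^ p : ℝ≥0) := by
    rw [← NNReal.summable_coe]
    simpa [NNReal.coe_rpow] using hα
  have hAne : A ≠ ⊤ := by
    rw [hA]
    simp_rw [hAcoe]
    exact ENNReal.tsum_coe_ne_top_iff_summable.2 hαnn
  -- key pointwise bound
  have hkey : ∀ i, (‖f i‖₊ : ℝ≥0∞) ^ p ≤
      ∑' j, (‖M i j‖₊ : ℝ≥0∞) ^ p * (‖α j‖₊ : ℝ≥0∞) ^ p := by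
    intro i
    have hsnn : Summable fun j => ‖M i j * α j‖₊ := by
      rw [← NNReal.summable_coe]; simpa using part1 i
    have h1 : (‖f i‖₊ : ℝ≥0∞) ≤ ∑' j, ((‖M i j * α j‖₊ : ℝ≥0) : ℝ≥0∞) := by
      rw [← ENNReal.coe_tsum hsnn]
      exact_mod_cast ENNReal.coe_le_coe.2 (nnnorm_tsum_le hsnn)
    calc (‖f i‖₊ : ℝ≥0∞) ^ p ≤ (∑' j, ((‖M i j * α j‖₊ : ℝ≥0) : ℝ≥0∞)) ^ p :=
          ENNReal.rpow_le_rpow h1 hp0.le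
      _ ≤ ∑' j, ((‖M i j * α j‖₊ : ℝ≥0) : ℝ≥0∞) ^ p := tsum_rpow_aux _ hp0 hp1
      _ = ∑' j, (‖M i j‖₊ : ℝ≥0∞) ^ p * (‖α j‖₊ : ℝ≥0∞) ^ p := by
          refine tsum_congr fun j => ?_
          rw [nnnorm_mul, ENNReal.coe_mul, ENNReal.mul_rpow_of_nonneg _ _ hp0.le]
  -- summing the key bound
  have hsum : (∑' i, (‖f i‖₊ : ℝ≥0∞) ^ p) ≤ C ^ p * A := by
    calc (∑' i, (‖f i‖₊ : ℝ≥0∞) ^ p)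
        ≤ ∑' i, ∑' j, (‖M i j‖₊ : ℝ≥0∞) ^ p * (‖α j‖₊ : ℝ≥0∞) ^ p :=
          ENNReal.tsum_le_tsum hkey
      _ = ∑' j, ∑' i, (‖M i j‖₊ : ℝ≥0∞) ^ p * (‖α j‖₊ : ℝ≥0∞) ^ p := ENNReal.tsum_comm
      _ = ∑' j, (∑' i, (‖M i j‖₊ : ℝ≥0∞) ^ p) * (‖α j‖₊ : ℝ≥0∞) ^ p := by
          refine tsum_congr fun j => ?_
          exact ENNReal.tsum_mul_right
      _ ≤ ∑' j, C ^ p * (‖α j‖₊ : ℝ≥0∞) ^ p :=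
          ENNReal.tsum_le_tsum fun j => mul_le_mul_left (hcol j) _
      _ = C ^ p * A := ENNReal.tsum_mul_left
  have hCpA : C ^ p * A ≠ ⊤ :=
    ENNReal.mul_ne_top (ENNReal.rpow_ne_top_of_nonneg hp0.le hM) hAne
  have hTne : (∑' i, (‖f i‖₊ : ℝ≥0∞) ^ p) ≠ ⊤ := ne_top_of_le_ne_top hCpA hsum
  -- part 2: summability
  have hfcoe : ∀ i : I, (‖f i‖₊ : ℝ≥0∞) ^ p = ((‖f i‖₊ ^ p : ℝ≥0) : ℝ≥0∞) :=
    fun i => (ENNReal.coe_rpow_of_nonneg _ hp0.le).symm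
  have hfnn : Summable fun i => (‖f i‖₊ ^ p : ℝ≥0) := by
    rw [← ENNReal.tsum_coe_ne_top_iff_summable]
    simpa [← hfcoe] using hTne
  have part2 : Summable fun i => ‖f i‖ ^ p := by
    have := NNReal.summable_coe.2 hfnn
    simpa [NNReal.coe_rpow] using this
  refine ⟨part2, ?_⟩
  -- part 3: the norm bound
  have hAeq : ∑' j, ‖α j‖ ^ p = A.toReal := by
    rw [hA]
    simp_rw [hAcoe]
    rw [← ENNReal.coe_tsum hαnn, ENNReal.coe_toReal, NNReal.coe_tsum]
    simp [NNReal.coe_rpow]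
  have hTeq : ∑' i, ‖f i‖ ^ p = (∑' i, (‖f i‖₊ : ℝ≥0∞) ^ p).toReal := by
    simp_rw [hfcoe]
    rw [← ENNReal.coe_tsum hfnn, ENNReal.coe_toReal, NNReal.coe_tsum]
    simp [NNReal.coe_rpow]
  have hmain : (∑' i, (‖f i‖₊ : ℝ≥0∞) ^ p) ^ (1 / p) ≤ C * A ^ (1 / p) := by
    calc (∑' i, (‖f i‖₊ : ℝ≥0∞) ^ p) ^ (1 / p) ≤ (C ^ p * A) ^ (1 / p) :=
          ENNReal.rpow_le_rpow hsum (by positivity)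
      _ = C * A ^ (1 / p) := by
          rw [ENNReal.mul_rpow_of_nonneg _ _ (by positivity : (0:ℝ) ≤ 1 / p),
            ← ENNReal.rpow_mul, mul_one_div, div_self hp0.ne', ENNReal.rpow_one]
  have hRne : C * A ^ (1 / p) ≠ ⊤ :=
    ENNReal.mul_ne_top hM (ENNReal.rpow_ne_top_of_nonneg (by positivity) hAne)
  have := ENNReal.toReal_mono hRne hmain
  rw [ENNReal.toReal_mul, ← ENNReal.toReal_rpow, ← ENNReal.toReal_rpow] at this
  rw [hTeq, hAeq]
  exact this
end
end

section
/- For every real N > 2 there are constants c₃, c₄, c₅ > 0 (depending only on N) such that for all a > 0 and b > 0: ∑_{k ∈ ℤ²} ⟨(a|k| − b)₊⟩^{−N} ≤ (b/a)² · (c₃ + c₄ · b^{−N}) + c₅, where |k| is the Euclidean norm of k ∈ ℤ² ⊂ ℝ² and (x)₊ = max{x, 0}. -/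
open scoped ENNReal

noncomputable section

lemma jap_one_le (t : ℝ) : 1 ≤ jap t := by
  have h : (1:ℝ) ≤ 1 + t ^ 2 := by nlinarith [sq_nonneg t]
  have := Real.sqrt_le_sqrt h
  simpa [jap] using this

lemma jap_pos (t : ℝ) : 0 < jap t := lt_of_lt_of_le one_pos (jap_one_le t)

lemma le_jap {t : ℝ} (ht : 0 ≤ t) : t ≤ jap t := by
  have h : t ^ 2 ≤ 1 + t ^ 2 := by nlinarith
  have := Real.sqrt_le_sqrt h
  rwa [Real.sqrt_sq ht] at this

lemma jap_mono {s t : ℝ} (h : s ^ 2 ≤ t ^ 2) : jap s ≤ jap t :=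
  Real.sqrt_le_sqrt (by nlinarith)

lemma rpow_neg_anti {x y p : ℝ} (hp : 0 ≤ p) (hx : 0 < x) (hxy : x ≤ y) :
    y ^ (-p) ≤ x ^ (-p) := by
  have hy : 0 < y := hx.trans_le hxy
  rw [Real.rpow_neg hx.le, Real.rpow_neg hy.le]
  have h1 : x ^ p ≤ y ^ p := Real.rpow_le_rpow hx.le hxy hp
  have h2 : 0 < x ^ p := Real.rpow_pos_of_pos hx p
  exact inv_anti₀ h2 h1

lemma jap_rpow_le_one {t p : ℝ} (hp : 0 ≤ p) : jap t ^ (-p) ≤ 1 :=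
  Real.rpow_le_one_of_one_le_of_nonpos (jap_one_le t) (neg_nonpos.mpr hp)

/-- The zeta-like constant. -/
def Zc (p : ℝ) : ℝ := ∑' n : ℕ, ((n : ℝ) + 1) ^ (-p)

lemma summable_Zc {p : ℝ} (hp : 1 < p) : Summable (fun n : ℕ => ((n : ℝ) + 1) ^ (-p)) := by
  have h := Real.summable_one_div_nat_rpow.mpr hp
  have h2 := (summable_nat_add_iff 1).mpr h
  refine h2.congr fun n => ?_
  have hn : (0:ℝ) < (n:ℝ) + 1 := by positivity
  rw [Real.rpow_neg hn.le]
  push_cast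
  rw [one_div]

lemma Zc_pos {p : ℝ} (hp : 1 < p) : 0 < Zc p := by
  have h := summable_Zc hp
  have h1 := Summable.le_tsum h 0 (fun j _ => by positivity)
  have h2 : (((0:ℕ):ℝ) + 1) ^ (-p) = 1 := by
    rw [Nat.cast_zero, zero_add, Real.one_rpow]
  rw [h2] at h1
  unfold Zc
  linarith

/-- Tail sum over ℕ. -/
lemma tail_sum {p a : ℝ} (hp : 1 < p) (ha : 0 < a) :
    ∑' n : ℕ, ENNReal.ofReal ((a * n + 1) ^ (-p)) ≤
      ENNReal.ofReal ((1 / a + 1) * Zc p) := by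
  set q : ℕ := ⌈1 / a⌉₊ with hqdef
  have hq1 : 1 ≤ q := Nat.one_le_iff_ne_zero.mpr (by
    have h0 : (0:ℝ) < 1 / a := by positivity
    exact (Nat.ceil_pos.mpr h0).ne')
  haveI : NeZero q := ⟨by omega⟩
  have haq : (1:ℝ) ≤ a * q := by
    have h := Nat.le_ceil (1 / a)
    rw [← hqdef] at h
    calc (1:ℝ) = a * (1 / a) := by field_simp
    _ ≤ a * q := by nlinarith
  have hpt : ∀ n : ℕ, ENNReal.ofReal ((a * n + 1) ^ (-p)) ≤
      ENNReal.ofReal ((((n / q : ℕ) : ℝ) + 1) ^ (-p)) := by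
    intro n
    apply ENNReal.ofReal_le_ofReal
    apply rpow_neg_anti (by linarith) (by positivity)
    have h1 : ((q * (n / q) : ℕ) : ℝ) ≤ (n : ℝ) := by
      exact_mod_cast Nat.mul_div_le n q
    push_cast at h1
    have h2 : (0:ℝ) ≤ ((n / q : ℕ) : ℝ) := by positivity
    nlinarith
  calc ∑' n : ℕ, ENNReal.ofReal ((a * n + 1) ^ (-p))
      ≤ ∑' n : ℕ, ENNReal.ofReal ((((n / q : ℕ) : ℝ) + 1) ^ (-p)) :=
        ENNReal.tsum_le_tsum hpt
    _ = ∑' x : ℕ × Fin q, ENNReal.ofReal (((x.1 : ℝ) + 1) ^ (-p)) := by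
        rw [← (Nat.divModEquiv q).tsum_eq
          (fun x : ℕ × Fin q => ENNReal.ofReal (((x.1 : ℝ) + 1) ^ (-p)))]
        exact tsum_congr fun n => rfl
    _ = ∑' j : ℕ, ∑' _r : Fin q, ENNReal.ofReal (((j : ℝ) + 1) ^ (-p)) :=
        ENNReal.tsum_prod'
    _ = ∑' j : ℕ, (q : ℝ≥0∞) * ENNReal.ofReal (((j : ℝ) + 1) ^ (-p)) := by
        apply tsum_congr
        intro j
        rw [tsum_fintype]
        simp [Finset.sum_const, mul_comm]
    _ = (q : ℝ≥0∞) * ∑' j : ℕ, ENNReal.ofReal (((j : ℝ) + 1) ^ (-p)) :=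
        ENNReal.tsum_mul_left
    _ = (q : ℝ≥0∞) * ENNReal.ofReal (Zc p) := by
        unfold Zc
        rw [ENNReal.ofReal_tsum_of_nonneg (fun n => by positivity) (summable_Zc hp)]
    _ ≤ ENNReal.ofReal ((1 / a + 1) * Zc p) := by
        rw [show ((q : ℝ≥0∞)) = ENNReal.ofReal (q : ℝ) by rw [ENNReal.ofReal_natCast]]
        rw [← ENNReal.ofReal_mul (by positivity)]
        apply ENNReal.ofReal_le_ofReal
        have hq : (q : ℝ) ≤ 1 / a + 1 := by
          have := Nat.ceil_lt_add_one (show (0:ℝ) ≤ 1 / a by positivity)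
          rw [← hqdef] at this
          linarith
        have hZ : 0 ≤ Zc p := (Zc_pos hp).le
        nlinarith

/-- 1D sum over ℕ. -/
lemma oneD_nat {p a b : ℝ} (hp : 1 < p) (ha : 0 < a) (hb : 0 < b) :
    ∑' n : ℕ, ENNReal.ofReal (jap (max (a * n - b) 0) ^ (-p)) ≤
      ENNReal.ofReal ((b + 1) / a + 1 + (1 / a + 1) * Zc p) := by
  set F : ℕ → ℝ≥0∞ := fun n => ENNReal.ofReal (jap (max (a * n - b) 0) ^ (-p)) with hF
  set M : ℕ := ⌈(b + 1) / a⌉₊ with hMdef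
  have hM : b + 1 ≤ a * M := by
    have h := Nat.le_ceil ((b + 1) / a)
    rw [← hMdef, div_le_iff₀ ha] at h
    linarith
  set s : Set ℕ := ↑(Finset.range M) with hs
  have hsplit : (∑' x : s, F x) + ∑' x : ↥sᶜ, F x = ∑' n, F n :=
    Summable.tsum_add_tsum_compl ENNReal.summable ENNReal.summable
  have hhead : (∑' x : s, F x) ≤ ENNReal.ofReal ((b + 1) / a + 1) := by
    have h1 : (∑' x : s, F x) = ∑ i ∈ Finset.range M, F i :=
      Finset.tsum_subtype (Finset.range M) F
    rw [h1]
    calc (∑ i ∈ Finset.range M, F i) ≤ ∑ _i ∈ Finset.range M, (1 : ℝ≥0∞) := by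
          apply Finset.sum_le_sum
          intro i _
          calc F i ≤ ENNReal.ofReal 1 :=
                ENNReal.ofReal_le_ofReal (jap_rpow_le_one (by linarith))
            _ = 1 := ENNReal.ofReal_one
      _ = (M : ℝ≥0∞) := by simp
      _ ≤ ENNReal.ofReal ((b + 1) / a + 1) := by
          rw [show ((M : ℝ≥0∞)) = ENNReal.ofReal (M : ℝ) by rw [ENNReal.ofReal_natCast]]
          apply ENNReal.ofReal_le_ofReal
          have := Nat.ceil_lt_add_one (show (0:ℝ) ≤ (b + 1) / a by positivity)
          rw [← hMdef] at this
          linarith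
  have htail : (∑' x : ↥sᶜ, F x) ≤ ENNReal.ofReal ((1 / a + 1) * Zc p) := by
    have hmem : ∀ x : ↥sᶜ, M ≤ (x : ℕ) := by
      intro x
      have := x.2
      simp only [hs, Set.mem_compl_iff, Finset.coe_range, Set.mem_Iio, not_lt] at this
      exact this
    have hpt : ∀ x : ↥sᶜ, F x ≤ ENNReal.ofReal ((a * (((x : ℕ) - M : ℕ) : ℝ) + 1) ^ (-p)) := by
      intro x
      have hxM : M ≤ (x : ℕ) := hmem x
      have hcast : (((x : ℕ) : ℝ)) = (((x : ℕ) - M : ℕ) : ℝ) + (M : ℝ) := by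
        have : ((x : ℕ) - M) + M = (x : ℕ) := Nat.sub_add_cancel hxM
        exact_mod_cast (congrArg (fun n : ℕ => (n : ℝ)) this).symm
      apply ENNReal.ofReal_le_ofReal
      have h1 : a * (((x : ℕ) - M : ℕ) : ℝ) + 1 ≤ a * ((x : ℕ) : ℝ) - b := by
        rw [hcast]
        have hq : (0 : ℝ) ≤ (((x : ℕ) - M : ℕ) : ℝ) := by positivity
        nlinarith
      have h2 : a * ((x : ℕ) : ℝ) - b ≤ max (a * ((x : ℕ) : ℝ) - b) 0 := le_max_left _ _
      have h3 : (0:ℝ) ≤ max (a * ((x : ℕ) : ℝ) - b) 0 := le_max_right _ _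
      have h4 : a * (((x : ℕ) - M : ℕ) : ℝ) + 1 ≤ jap (max (a * ((x : ℕ) : ℝ) - b) 0) :=
        le_trans (le_trans h1 h2) (le_jap h3)
      exact rpow_neg_anti (by linarith) (by positivity) h4
    have hinj : Function.Injective (fun x : ↥sᶜ => (x : ℕ) - M) := by
      intro x y hxy
      have hx := hmem x
      have hy := hmem y
      apply Subtype.ext
      have h : (x : ℕ) - M = (y : ℕ) - M := hxy
      omega
    calc (∑' x : ↥sᶜ, F x)
        ≤ ∑' x : ↥sᶜ, ENNReal.ofReal ((a * (((x : ℕ) - M : ℕ) : ℝ) + 1) ^ (-p)) :=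
          ENNReal.tsum_le_tsum hpt
      _ ≤ ∑' n : ℕ, ENNReal.ofReal ((a * n + 1) ^ (-p)) :=
          ENNReal.tsum_comp_le_tsum_of_injective hinj
            (fun n : ℕ => ENNReal.ofReal ((a * n + 1) ^ (-p)))
      _ ≤ ENNReal.ofReal ((1 / a + 1) * Zc p) := tail_sum hp ha
  calc (∑' n : ℕ, F n) = (∑' x : s, F x) + ∑' x : ↥sᶜ, F x := hsplit.symm
    _ ≤ ENNReal.ofReal ((b + 1) / a + 1) + ENNReal.ofReal ((1 / a + 1) * Zc p) :=
        add_le_add hhead htail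
    _ = ENNReal.ofReal ((b + 1) / a + 1 + (1 / a + 1) * Zc p) := by
        rw [ENNReal.ofReal_add (by positivity)
          (mul_nonneg (by positivity) (Zc_pos hp).le)]

/-- 1D sum over ℤ. -/
lemma oneD_int {p a b : ℝ} (hp : 1 < p) (ha : 0 < a) (hb : 0 < b) :
    ∑' i : ℤ, ENNReal.ofReal (jap (max (a * |(i : ℝ)| - b) 0) ^ (-p)) ≤
      ENNReal.ofReal (2 * ((b + 1) / a + 1 + (1 / a + 1) * Zc p)) := by
  set f : ℤ → ℝ≥0∞ := fun i => ENNReal.ofReal (jap (max (a * |(i : ℝ)| - b) 0) ^ (-p))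
    with hf
  set F : ℕ → ℝ≥0∞ := fun n => ENNReal.ofReal (jap (max (a * n - b) 0) ^ (-p)) with hF
  have heq : ∑' i : ℤ, f i = (∑' n : ℕ, f n) + ∑' n : ℕ, f (-(n + 1)) :=
    tsum_of_nat_of_neg_add_one ENNReal.summable ENNReal.summable
  have h1 : (∑' n : ℕ, f n) ≤ ENNReal.ofReal ((b + 1) / a + 1 + (1 / a + 1) * Zc p) := by
    have hc : ∀ n : ℕ, f (n : ℤ) = F n := by
      intro n
      have hab : |(((n : ℤ)) : ℝ)| = ((n : ℕ) : ℝ) := by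
        push_cast
        exact abs_of_nonneg (by positivity)
      simp only [hf, hF, hab]
    rw [tsum_congr hc]
    exact oneD_nat hp ha hb
  have h2 : (∑' n : ℕ, f (-(n + 1))) ≤
      ENNReal.ofReal ((b + 1) / a + 1 + (1 / a + 1) * Zc p) := by
    have hcong : ∀ n : ℕ, f (-(n + 1)) = F (n + 1) := by
      intro n
      have hab : |((-((n : ℤ) + 1) : ℤ) : ℝ)| = ((n + 1 : ℕ) : ℝ) := by
        push_cast
        rw [abs_neg]
        exact abs_of_nonneg (by positivity)
      simp only [hf, hF, hab]
    rw [tsum_congr hcong]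
    refine le_trans ?_ (oneD_nat hp ha hb)
    exact ENNReal.tsum_comp_le_tsum_of_injective (add_left_injective 1) F
  have hnn : (0:ℝ) ≤ (b + 1) / a + 1 + (1 / a + 1) * Zc p :=
    add_nonneg (by positivity) (mul_nonneg (by positivity) (Zc_pos hp).le)
  calc ∑' i : ℤ, f i ≤ ENNReal.ofReal ((b + 1) / a + 1 + (1 / a + 1) * Zc p) +
        ENNReal.ofReal ((b + 1) / a + 1 + (1 / a + 1) * Zc p) := by
        rw [heq]; exact add_le_add h1 h2
    _ = ENNReal.ofReal (2 * ((b + 1) / a + 1 + (1 / a + 1) * Zc p)) := by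
        rw [← ENNReal.ofReal_add hnn hnn]
        ring_nf

lemma sq_ineq {K x y B S : ℝ} (hK : 2 ≤ K) (hx : 0 < x) (hy : 0 < y) (hB : 0 ≤ B)
    (hkey : y ^ 2 ≤ x ^ 2 * B + x ^ 2) (hS : S = 2 * x + K * y + K) :
    S * S ≤ x ^ 2 * (6 * K ^ 2 + 3 * K ^ 2 * B) + 3 * K ^ 2 := by
  have hS0 : 0 ≤ S := by nlinarith
  have h1 : S ≤ K * x + K * y + K := by nlinarith
  have h2 : S * S ≤ (K * x + K * y + K) * (K * x + K * y + K) := by nlinarith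
  have h3 : (K * x + K * y + K) * (K * x + K * y + K) ≤
      K ^ 2 * (3 * (x ^ 2 + y ^ 2 + 1)) := by
    nlinarith [mul_nonneg (sq_nonneg K) (sq_nonneg (x - y)), mul_nonneg (sq_nonneg K) (sq_nonneg (x - 1)), mul_nonneg (sq_nonneg K) (sq_nonneg (y - 1))]
  have h4 : K ^ 2 * (3 * (x ^ 2 + y ^ 2 + 1)) ≤
      K ^ 2 * (3 * (x ^ 2 + (x ^ 2 * B + x ^ 2) + 1)) := by
    nlinarith [mul_le_mul_of_nonneg_left hkey (show (0:ℝ) ≤ 3 * K ^ 2 by positivity)]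
  have h5 : K ^ 2 * (3 * (x ^ 2 + (x ^ 2 * B + x ^ 2) + 1)) =
      x ^ 2 * (6 * K ^ 2 + 3 * K ^ 2 * B) + 3 * K ^ 2 := by ring
  linarith

/-- Lemma 7.10 (`sumlemma`): a lattice sum estimate. -/
theorem lattice_sum_bound (N : ℝ) (hN : 2 < N) :
    ∃ c₃ c₄ c₅ : ℝ, 0 < c₃ ∧ 0 < c₄ ∧ 0 < c₅ ∧
      ∀ a b : ℝ, 0 < a → 0 < b →
        (∑' k : ℤ × ℤ,
            ENNReal.ofReal
              (jap (max (a * Real.sqrt ((k.1 : ℝ) ^ 2 + (k.2 : ℝ) ^ 2) - b) 0) ^ (-N))) ≤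
          ENNReal.ofReal ((b / a) ^ 2 * (c₃ + c₄ * b ^ (-N)) + c₅) := by
  set p : ℝ := N / 2 with hpdef
  have hp : 1 < p := by rw [hpdef]; linarith
  have hZ : 0 < Zc p := Zc_pos hp
  set K : ℝ := 2 * (Zc p + 1) with hKdef
  have hK : 0 < K := by rw [hKdef]; linarith
  refine ⟨6 * K ^ 2, 3 * K ^ 2, 3 * K ^ 2, by positivity, by positivity, by positivity, ?_⟩
  intro a b ha hb
  set g : ℤ → ℝ≥0∞ := fun i => ENNReal.ofReal (jap (max (a * |(i : ℝ)| - b) 0) ^ (-p))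
    with hg
  have hpt : ∀ k : ℤ × ℤ,
      ENNReal.ofReal
        (jap (max (a * Real.sqrt ((k.1 : ℝ) ^ 2 + (k.2 : ℝ) ^ 2) - b) 0) ^ (-N)) ≤
      g k.1 * g k.2 := by
    intro k
    set r : ℝ := Real.sqrt ((k.1 : ℝ) ^ 2 + (k.2 : ℝ) ^ 2) with hr
    have key : ∀ c : ℝ, |c| ≤ r →
        jap (max (a * r - b) 0) ^ (-p) ≤ jap (max (a * |c| - b) 0) ^ (-p) := by
      intro c hc
      apply rpow_neg_anti (by linarith) (jap_pos _)
      apply jap_mono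
      have h0 : max (a * |c| - b) 0 ≤ max (a * r - b) 0 := by
        apply max_le_max _ le_rfl
        nlinarith [abs_nonneg c]
      have h1 : (0:ℝ) ≤ max (a * |c| - b) 0 := le_max_right _ _
      nlinarith
    have hr1 : |(k.1 : ℝ)| ≤ r := by
      rw [hr, ← Real.sqrt_sq_eq_abs]
      exact Real.sqrt_le_sqrt (by nlinarith [sq_nonneg (k.2 : ℝ)])
    have hr2 : |(k.2 : ℝ)| ≤ r := by
      rw [hr, ← Real.sqrt_sq_eq_abs]
      exact Real.sqrt_le_sqrt (by nlinarith [sq_nonneg (k.1 : ℝ)])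
    have hsplit : jap (max (a * r - b) 0) ^ (-N) =
        jap (max (a * r - b) 0) ^ (-p) * jap (max (a * r - b) 0) ^ (-p) := by
      rw [← Real.rpow_add (jap_pos _)]
      congr 1
      rw [hpdef]; ring
    rw [hsplit, ENNReal.ofReal_mul (Real.rpow_nonneg (jap_pos _).le _)]
    exact mul_le_mul' (ENNReal.ofReal_le_ofReal (key _ hr1))
      (ENNReal.ofReal_le_ofReal (key _ hr2))
  have hS : (0:ℝ) ≤ 2 * ((b + 1) / a + 1 + (1 / a + 1) * Zc p) := by
    have h0 : (0:ℝ) ≤ (1 / a + 1) * Zc p := mul_nonneg (by positivity) hZ.le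
    have h1 : (0:ℝ) ≤ (b + 1) / a + 1 := by positivity
    linarith
  have hkey : (1 / a) ^ 2 ≤ (b / a) ^ 2 * b ^ (-N) + (b / a) ^ 2 := by
    have hB0 : (0:ℝ) ≤ b ^ (-N) := Real.rpow_nonneg hb.le _
    have h1 : (1:ℝ) ≤ b ^ 2 * b ^ (-N) + b ^ 2 := by
      rcases le_or_gt b 1 with hb1 | hb1
      · have he : b ^ 2 * b ^ (-N) = b ^ (2 - N) := by
          rw [show b ^ 2 = b ^ ((2:ℕ):ℝ) from (Real.rpow_natCast b 2).symm,
            ← Real.rpow_add hb]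
          rw [← sub_eq_add_neg]
          norm_num
        have := Real.one_le_rpow_of_pos_of_le_one_of_nonpos hb hb1
          (show 2 - N ≤ 0 by linarith)
        nlinarith [sq_nonneg b]
      · nlinarith
    calc (1 / a) ^ 2 = 1 * (1 / a) ^ 2 := by ring
      _ ≤ (b ^ 2 * b ^ (-N) + b ^ 2) * (1 / a) ^ 2 :=
          mul_le_mul_of_nonneg_right h1 (sq_nonneg _)
      _ = (b / a) ^ 2 * b ^ (-N) + (b / a) ^ 2 := by ring
  calc (∑' k : ℤ × ℤ,
        ENNReal.ofReal
          (jap (max (a * Real.sqrt ((k.1 : ℝ) ^ 2 + (k.2 : ℝ) ^ 2) - b) 0) ^ (-N)))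
      ≤ ∑' k : ℤ × ℤ, g k.1 * g k.2 := ENNReal.tsum_le_tsum hpt
    _ = (∑' i : ℤ, g i) * (∑' i : ℤ, g i) := by
        rw [ENNReal.tsum_prod']
        simp_rw [ENNReal.tsum_mul_left]
        rw [ENNReal.tsum_mul_right]
    _ ≤ ENNReal.ofReal (2 * ((b + 1) / a + 1 + (1 / a + 1) * Zc p)) *
        ENNReal.ofReal (2 * ((b + 1) / a + 1 + (1 / a + 1) * Zc p)) :=
        mul_le_mul' (oneD_int hp ha hb) (oneD_int hp ha hb)
    _ = ENNReal.ofReal ((2 * ((b + 1) / a + 1 + (1 / a + 1) * Zc p)) *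
        (2 * ((b + 1) / a + 1 + (1 / a + 1) * Zc p))) := (ENNReal.ofReal_mul hS).symm
    _ ≤ ENNReal.ofReal ((b / a) ^ 2 * (6 * K ^ 2 + 3 * K ^ 2 * b ^ (-N)) + 3 * K ^ 2) := by
        apply ENNReal.ofReal_le_ofReal
        apply sq_ineq (K := K) (x := b / a) (y := 1 / a) (B := b ^ (-N))
          (by rw [hKdef]; linarith) (by positivity) (by positivity)
          (Real.rpow_nonneg hb.le _) hkey
        rw [hKdef]
        ring

end
end
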